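/- arXiv:1201.3795 — 3 statements merged into one kernel-verified Lean document; each statement's English description precedes it below -/
import Mathlib

section
/- Fix c > 0 and an integer k ≥ 1 with c < n, let p = c/n, and let H be an (n,k,p) Newman–Watts small world. For v ∈ [n] and a positive integer j, let B_{j,v} be the collection of all subsets S ⊆ [n] with v ∈ S, |S| = j, and H[S] connected, and let B_j be the union of the B_{j,v} over v ∈ [n] (i.e., all connected sets of size j). Then E[|B_{j,v}|] ≤ (4(c+2k))^j for every v, and E[|B_j|] ≤ n·(4(c+2k))^j. -/
open scoped Classical

noncomputable section

/-- The `(n,k)`-ring adjacency on `Fin n` (with mod-`n` arithmetic):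
`x` and `y` are adjacent iff `(y-x) mod n ∈ {1,…,k}` (equivalently, in `{-k,…,-1}`). -/
def ringAdj (n k : ℕ) (x y : Fin n) : Prop :=
  x ≠ y ∧ ((y - x).val ≤ k ∨ (x - y).val ≤ k)

/-- The Newman–Watts small world determined by the Bernoulli coordinates `η`:
the `(n,k)`-ring together with all pairs `{x,y}` with `η s(x,y) = true`. -/
def nwGraph (n k : ℕ) (η : Sym2 (Fin n) → Bool) : SimpleGraph (Fin n) where
  Adj x y := x ≠ y ∧ ((y - x).val ≤ k ∨ (x - y).val ≤ k ∨ η s(x, y) = true)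
  symm := by
    constructor
    rintro x y ⟨hne, h⟩
    refine ⟨hne.symm, ?_⟩
    rcases h with h | h | h
    · exact Or.inr (Or.inl h)
    · exact Or.inl h
    · exact Or.inr (Or.inr (by rwa [Sym2.eq_swap]))
  loopless := by constructor; rintro x ⟨hne, -⟩; exact hne rfl

/-- Product-Bernoulli(`p`) weight of an outcome `η`. -/
def nwWeight (n : ℕ) (p : ℝ) (η : Sym2 (Fin n) → Bool) : ℝ :=
  ∏ e : Sym2 (Fin n), if η e then p else 1 - p

/-- Probability of an event under the product Bernoulli(`p`) measure. -/
def nwPr (n : ℕ) (p : ℝ) (A : (Sym2 (Fin n) → Bool) → Prop) : ℝ :=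
  ∑ η : Sym2 (Fin n) → Bool, if A η then nwWeight n p η else 0

/-- Expectation under the product Bernoulli(`p`) measure. -/
def nwExp (n : ℕ) (p : ℝ) (X : (Sym2 (Fin n) → Bool) → ℝ) : ℝ :=
  ∑ η : Sym2 (Fin n) → Bool, nwWeight n p η * X η

variable {V : Type*} [Fintype V] [DecidableEq V]

/-- Degree of `v` in `G`. -/
def gdeg (G : SimpleGraph V) (v : V) : ℕ :=
  (Finset.univ.filter fun u => G.Adj v u).card

/-- Number of edges of `G`. -/
def edgeCount (G : SimpleGraph V) : ℕ := (∑ v, gdeg G v) / 2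

/-- `e(S,Sᶜ)`: number of edges with one endpoint in `S`, the other outside. -/
def eCross (G : SimpleGraph V) (S : Finset V) : ℕ :=
  ∑ x ∈ S, ∑ y ∈ Sᶜ, if G.Adj x y then 1 else 0

/-- `e(S) = Σ_{v∈S} deg v`. -/
def eTot (G : SimpleGraph V) (S : Finset V) : ℕ := ∑ x ∈ S, gdeg G x

/-- `e(S,S)`: number of edges with both endpoints in `S`. -/
def eIn (G : SimpleGraph V) (S : Finset V) : ℕ :=
  (∑ x ∈ S, ∑ y ∈ S, if G.Adj x y then 1 else 0) / 2

/-- `S` is connected if the induced subgraph `G[S]` is connected. -/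
def connectedSet (G : SimpleGraph V) (S : Finset V) : Prop :=
  (G.induce (S : Set V)).Connected

/-- One step of the lazy simple random walk applied to a distribution. -/
def lazyStep (G : SimpleGraph V) (μ : V → ℝ) : V → ℝ := fun v =>
  μ v / 2 + ∑ u ∈ Finset.univ.filter (fun u => G.Adj u v), μ u / (2 * gdeg G u)

/-- Distribution of the lazy simple random walk after `t` steps, started at `x`. -/
def walkDist (G : SimpleGraph V) (x : V) : ℕ → V → ℝ
  | 0 => fun v => if v = x then 1 else 0
  | (t + 1) => lazyStep G (walkDist G x t)

/-- Stationary distribution `π(v) = deg v / (2|E|)`. -/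
def statDist (G : SimpleGraph V) (v : V) : ℝ := gdeg G v / (2 * edgeCount G)

/-- Total variation distance. -/
def tvDist (μ ν : V → ℝ) : ℝ := (∑ v, |μ v - ν v|) / 2

/-- Mixing time `max_x min {t : ‖μ_{t,x} − π‖_TV ≤ 1/4}`. -/
def mixingTime (G : SimpleGraph V) : ℕ :=
  Finset.univ.sup fun x => sInf {t : ℕ | tvDist (walkDist G x t) (statDist G) ≤ 1 / 4}


lemma sum_prod_bool {E : Type*} [Fintype E] [DecidableEq E] (g : E → Bool → ℝ) :
    ∑ η : E → Bool, ∏ e, g e (η e) = ∏ e, (g e true + g e false) := by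
  have := (Fintype.prod_sum (ι := E) (κ := fun _ : E => Bool) g).symm
  rw [this]
  refine Finset.prod_congr rfl fun e _ => ?_
  simp

lemma nwWeight_nonneg {n : ℕ} {p : ℝ} (h0 : 0 ≤ p) (h1 : p ≤ 1)
    (η : Sym2 (Fin n) → Bool) : 0 ≤ nwWeight n p η := by
  refine Finset.prod_nonneg fun e _ => ?_
  split <;> linarith

lemma nwPr_forall_mem {n : ℕ} {p : ℝ} (h0 : 0 ≤ p) (h1 : p ≤ 1) (F : Finset (Sym2 (Fin n))) :
    nwPr n p (fun η => ∀ e ∈ F, η e = true) = p ^ F.card := by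
  set g : Sym2 (Fin n) → Bool → ℝ := fun e b => if e ∈ F then (if b then p else 0)
      else (if b then p else 1 - p) with hg
  have key : ∀ η : Sym2 (Fin n) → Bool,
      (@ite ℝ (∀ e ∈ F, η e = true) (Classical.propDecidable _) (nwWeight n p η) 0)
      = ∏ e : Sym2 (Fin n), g e (η e) := by
    intro η
    by_cases hA : ∀ e ∈ F, η e = true
    · rw [if_pos hA]
      unfold nwWeight
      refine Finset.prod_congr rfl fun e _ => ?_
      by_cases he : e ∈ F
      · simp only [hg, he, if_true, hA e he]
      · simp [hg, he]
    · rw [if_neg hA]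
      push_neg at hA
      obtain ⟨e, heF, hne⟩ := hA
      rw [eq_comm]
      refine Finset.prod_eq_zero (Finset.mem_univ e) ?_
      simp [hg, heF, hne]
  have step1 : nwPr n p (fun η => ∀ e ∈ F, η e = true)
      = ∑ η : Sym2 (Fin n) → Bool, ∏ e : Sym2 (Fin n), g e (η e) :=
    Finset.sum_congr rfl fun η _ => key η
  rw [step1, sum_prod_bool g]
  have : ∀ e : Sym2 (Fin n), g e true + g e false = if e ∈ F then p else 1 := by
    intro e; by_cases he : e ∈ F <;> simp [hg, he]
  rw [Finset.prod_congr rfl fun e _ => this e, Finset.prod_ite_mem, Finset.univ_inter,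
    Finset.prod_const]

lemma nwPr_mono {n : ℕ} {p : ℝ} (h0 : 0 ≤ p) (h1 : p ≤ 1)
    {A B : (Sym2 (Fin n) → Bool) → Prop} (h : ∀ η, A η → B η) :
    nwPr n p A ≤ nwPr n p B := by
  refine Finset.sum_le_sum fun η _ => ?_
  by_cases hA : A η
  · rw [if_pos hA, if_pos (h η hA)]
  · rw [if_neg hA]
    split
    · exact nwWeight_nonneg h0 h1 η
    · exact le_refl _

def qwt (n k : ℕ) (p : ℝ) (x y : Fin n) : ℝ :=
  if x = y then 0 else if ((y - x).val ≤ k ∨ (x - y).val ≤ k) then 1 else p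

lemma qwt_nonneg {n k : ℕ} {p : ℝ} (h0 : 0 ≤ p) (x y : Fin n) : 0 ≤ qwt n k p x y := by
  unfold qwt; split; · exact le_refl 0
  split; · exact zero_le_one
  · exact h0

lemma nwPr_false {n : ℕ} {p : ℝ} {A : (Sym2 (Fin n) → Bool) → Prop} (h : ∀ η, ¬ A η) :
    nwPr n p A = 0 := by
  unfold nwPr
  refine Finset.sum_eq_zero fun η _ => if_neg (h η)

lemma nwPr_adj_le {n k m : ℕ} {p : ℝ} (h0 : 0 ≤ p) (h1 : p ≤ 1)
    (a b : Fin m → Fin n) (hinj : Function.Injective (fun i => s(a i, b i))) :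
    nwPr n p (fun η => ∀ i, (nwGraph n k η).Adj (a i) (b i))
      ≤ ∏ i, qwt n k p (a i) (b i) := by
  by_cases hne : ∀ i, a i ≠ b i
  · set I : Finset (Fin m) :=
      Finset.univ.filter (fun i => ¬ (((b i) - (a i)).val ≤ k ∨ ((a i) - (b i)).val ≤ k)) with hI
    set F : Finset (Sym2 (Fin n)) := I.image (fun i => s(a i, b i)) with hF
    have himp : ∀ η, (∀ i, (nwGraph n k η).Adj (a i) (b i)) → (∀ e ∈ F, η e = true) := by
      intro η hadj e he
      rw [hF, Finset.mem_image] at he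
      obtain ⟨i, hi, rfl⟩ := he
      rw [hI, Finset.mem_filter] at hi
      rcases (hadj i).2 with h | h | h
      · exact absurd (Or.inl h) hi.2
      · exact absurd (Or.inr h) hi.2
      · exact h
    calc nwPr n p (fun η => ∀ i, (nwGraph n k η).Adj (a i) (b i))
        ≤ nwPr n p (fun η => ∀ e ∈ F, η e = true) := nwPr_mono h0 h1 himp
      _ = p ^ F.card := nwPr_forall_mem h0 h1 F
      _ = ∏ i, qwt n k p (a i) (b i) := by
          rw [hF, Finset.card_image_of_injective _ hinj]
          rw [show (∏ i, qwt n k p (a i) (b i)) = ∏ i ∈ Finset.univ, qwt n k p (a i) (b i) from rfl]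
          rw [← Finset.prod_filter_mul_prod_filter_not Finset.univ
            (fun i => ¬ (((b i) - (a i)).val ≤ k ∨ ((a i) - (b i)).val ≤ k))]
          have e1 : ∀ i ∈ I, qwt n k p (a i) (b i) = p := by
            intro i hi
            rw [hI, Finset.mem_filter] at hi
            unfold qwt
            rw [if_neg (hne i), if_neg hi.2]
          have e2 : ∀ i ∈ Finset.univ.filter
              (fun i => ¬¬ (((b i) - (a i)).val ≤ k ∨ ((a i) - (b i)).val ≤ k)),
              qwt n k p (a i) (b i) = 1 := by
            intro i hi
            rw [Finset.mem_filter, not_not] at hi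
            unfold qwt
            rw [if_neg (hne i), if_pos hi.2]
          rw [Finset.prod_congr rfl e1, Finset.prod_congr rfl e2, Finset.prod_const,
            Finset.prod_const_one, mul_one, hI]
  · push_neg at hne
    obtain ⟨i, hi⟩ := hne
    have : ∀ η, ¬ (∀ i, (nwGraph n k η).Adj (a i) (b i)) := by
      intro η h
      exact (h i).1 hi
    rw [nwPr_false this]
    exact Finset.prod_nonneg fun i _ => qwt_nonneg h0 _ _

lemma tree_edges_inj {n m : ℕ} (p : Fin m → Fin (m+1)) (hp : Monotone p)
    (ℓ : Fin (m+1) → Fin n) (hℓ : Function.Injective ℓ) :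
    Function.Injective (fun i : Fin m => s(ℓ (p i), ℓ i.succ)) := by
  intro i i' h
  simp only [Sym2.eq, Sym2.rel_iff', Prod.mk.injEq, Prod.swap_prod_mk] at h
  rcases h with ⟨-, h2⟩ | ⟨h1, h2⟩
  · exact Fin.succ_injective _ (hℓ h2)
  · have e1 : p i = i'.succ := hℓ h1
    have e2 : i.succ = p i' := hℓ h2
    rcases le_total i i' with hle | hle
    · have hmono := hp hle
      rw [e1, ← e2] at hmono
      exact le_antisymm hle (Fin.succ_le_succ_iff.mp hmono)
    · have hmono := hp hle
      rw [e1, ← e2] at hmono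
      exact (le_antisymm hle (Fin.succ_le_succ_iff.mp hmono)).symm

lemma half_ring_card {n k : ℕ} (x : Fin n) :
    (Finset.univ.filter fun y : Fin n => y ≠ x ∧ (y - x).val ≤ k).card ≤ k := by
  haveI : NeZero n := ⟨x.pos.ne'⟩
  have h1 : (Finset.univ.filter fun y : Fin n => y ≠ x ∧ (y - x).val ≤ k).card
      ≤ (Finset.Icc 1 k).card := by
    apply Finset.card_le_card_of_injOn (fun y => (y - x).val)
    · intro y hy
      rw [Finset.mem_coe, Finset.mem_filter] at hy
      rw [Finset.mem_coe, Finset.mem_Icc]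
      refine ⟨?_, hy.2.2⟩
      rw [Nat.one_le_iff_ne_zero]
      intro h0
      exact hy.2.1 (by rw [← sub_eq_zero]; exact Fin.val_injective h0)
    · intro y _ y' _ h
      have : y - x = y' - x := Fin.val_injective h
      exact sub_left_injective this
  refine h1.trans_eq ?_
  rw [Nat.card_Icc]
  omega

lemma ring_card_le {n k : ℕ} (x : Fin n) :
    (Finset.univ.filter
      (fun y : Fin n => y ≠ x ∧ ((y - x).val ≤ k ∨ (x - y).val ≤ k))).card ≤ 2 * k := by
  have hsub : (Finset.univ.filter
      (fun y : Fin n => y ≠ x ∧ ((y - x).val ≤ k ∨ (x - y).val ≤ k)))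
      ⊆ (Finset.univ.filter fun y : Fin n => y ≠ x ∧ (y - x).val ≤ k)
        ∪ (Finset.univ.filter fun y : Fin n => y ≠ x ∧ (x - y).val ≤ k) := by
    intro y hy
    rw [Finset.mem_filter] at hy
    rcases hy.2.2 with h | h
    · exact Finset.mem_union_left _ (Finset.mem_filter.mpr ⟨Finset.mem_univ y, hy.2.1, h⟩)
    · exact Finset.mem_union_right _ (Finset.mem_filter.mpr ⟨Finset.mem_univ y, hy.2.1, h⟩)
  have h2 : (Finset.univ.filter fun y : Fin n => y ≠ x ∧ (x - y).val ≤ k).card ≤ k := by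
    haveI : NeZero n := ⟨x.pos.ne'⟩
    have h1 : (Finset.univ.filter fun y : Fin n => y ≠ x ∧ (x - y).val ≤ k).card
        ≤ (Finset.Icc 1 k).card := by
      apply Finset.card_le_card_of_injOn (fun y => (x - y).val)
      · intro y hy
        rw [Finset.mem_coe, Finset.mem_filter] at hy
        rw [Finset.mem_coe, Finset.mem_Icc]
        refine ⟨?_, hy.2.2⟩
        rw [Nat.one_le_iff_ne_zero]
        intro h0
        have : x - y = 0 := Fin.val_injective h0
        rw [sub_eq_zero] at this
        exact hy.2.1 this.symm
      · intro y _ y' _ h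
        have : x - y = x - y' := Fin.val_injective h
        exact sub_right_injective this
    refine h1.trans_eq ?_
    rw [Nat.card_Icc]
    omega
  calc _ ≤ _ := Finset.card_le_card hsub
    _ ≤ _ + _ := Finset.card_union_le _ _
    _ ≤ k + k := Nat.add_le_add (half_ring_card x) h2
    _ = 2 * k := by omega

lemma qwt_row_sum {n k : ℕ} {p : ℝ} (h0 : 0 ≤ p) (x : Fin n) :
    ∑ y, qwt n k p x y ≤ 2 * k + n * p := by
  set R : Finset (Fin n) := Finset.univ.filter
    (fun y => y ≠ x ∧ ((y - x).val ≤ k ∨ (x - y).val ≤ k)) with hR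
  have hpoint : ∀ y : Fin n, qwt n k p x y ≤ (if y ∈ R then 1 else p) := by
    intro y
    unfold qwt
    by_cases hxy : x = y
    · rw [if_pos hxy]
      split
      · exact zero_le_one
      · exact h0
    · rw [if_neg hxy]
      by_cases hring : ((y - x).val ≤ k ∨ (x - y).val ≤ k)
      · rw [if_pos hring, hR,
          if_pos (Finset.mem_filter.mpr ⟨Finset.mem_univ y, fun h => hxy h.symm, hring⟩)]
      · rw [if_neg hring]
        split
        · next hmem => exact absurd (Finset.mem_filter.mp hmem).2.2 hring
        · exact le_refl p
  have hsum : ∑ y, qwt n k p x y ≤ ∑ y, (if y ∈ R then (1:ℝ) else p) :=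
    Finset.sum_le_sum fun y _ => hpoint y
  have hsplit : ∑ y, (if y ∈ R then (1:ℝ) else p) = R.card * 1 + Rᶜ.card * p := by
    rw [Finset.sum_ite, Finset.sum_const, Finset.sum_const, Finset.filter_univ_mem]
    have hcompl : Finset.univ.filter (fun y => y ∉ R) = Rᶜ := by
      ext y; simp
    rw [hcompl, nsmul_eq_mul, nsmul_eq_mul]
  refine hsum.trans (hsplit.trans_le ?_)
  have h1 : (R.card : ℝ) ≤ 2 * k := by
    have := ring_card_le (k := k) x
    rw [← hR] at this
    exact_mod_cast this
  have h2 : (Rᶜ.card : ℝ) ≤ n := by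
    have h3 := Finset.card_le_univ Rᶜ
    rw [Fintype.card_fin] at h3
    exact_mod_cast h3
  rw [mul_one]
  exact add_le_add h1 (mul_le_mul_of_nonneg_right h2 h0)

lemma sum_prod_chain {n : ℕ} (q : Fin n → Fin n → ℝ) (hq0 : ∀ x y, 0 ≤ q x y)
    (D : ℝ) (hrow : ∀ x, ∑ y, q x y ≤ D) (hD : 0 ≤ D) :
    ∀ (m : ℕ) (v : Fin n) (p : Fin m → Fin (m+1)), (∀ i : Fin m, (p i : ℕ) ≤ (i : ℕ)) →
    (∑ ℓ : Fin (m+1) → Fin n,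
      if ℓ 0 = v then ∏ i : Fin m, q (ℓ (p i)) (ℓ i.succ) else 0) ≤ D ^ m := by
  intro m
  induction m with
  | zero =>
    intro v p _
    rw [pow_zero]
    have key : ∀ ℓ : Fin 1 → Fin n,
        (if ℓ 0 = v then ∏ i : Fin 0, q (ℓ (p i)) (ℓ i.succ) else 0)
        = if ℓ = fun _ => v then 1 else 0 := by
      intro ℓ
      by_cases h : ℓ 0 = v
      · rw [if_pos h, if_pos (by funext i; rw [Fin.eq_zero i]; exact h)]
        exact Finset.prod_of_isEmpty _
      · rw [if_neg h, if_neg (by intro hh; exact h (by rw [hh]))]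
    rw [Finset.sum_congr rfl fun ℓ _ => key ℓ, Finset.sum_ite_eq' Finset.univ]
    rw [if_pos (Finset.mem_univ _)]
  | succ m ih =>
    intro v p hple
    have hPlt : (p (Fin.last m) : ℕ) < m + 1 := by
      have := hple (Fin.last m); simp at this; omega
    set P' : Fin (m+1) := ⟨(p (Fin.last m) : ℕ), hPlt⟩ with hP'
    have hPcast : Fin.castSucc P' = p (Fin.last m) := by
      apply Fin.ext; simp [hP']
    set p' : Fin m → Fin (m+1) := fun i =>
      ⟨(p i.castSucc : ℕ), by have := hple i.castSucc; simp at this; omega⟩ with hp'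
    have hp'cast : ∀ i : Fin m, Fin.castSucc (p' i) = p i.castSucc := by
      intro i; apply Fin.ext; simp [hp']
    have hp'le : ∀ i : Fin m, (p' i : ℕ) ≤ (i : ℕ) := by
      intro i; have := hple i.castSucc; simp [hp'] at this ⊢; omega
    -- pointwise identity for snoc
    have key : ∀ (x : Fin n) (ℓ' : Fin (m+1) → Fin n),
        (if (Fin.snoc ℓ' x : Fin (m+2) → Fin n) 0 = v then
          ∏ i : Fin (m+1), q ((Fin.snoc ℓ' x : Fin (m+2) → Fin n) (p i))
            ((Fin.snoc ℓ' x : Fin (m+2) → Fin n) i.succ) else 0)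
        = (if ℓ' 0 = v then (∏ i : Fin m, q (ℓ' (p' i)) (ℓ' i.succ)) * q (ℓ' P') x else 0) := by
      intro x ℓ'
      have h0 : (Fin.snoc ℓ' x : Fin (m+2) → Fin n) 0 = ℓ' 0 := by
        rw [show (0 : Fin (m+2)) = Fin.castSucc 0 by rfl, Fin.snoc_castSucc]
      have hprod : (∏ i : Fin (m+1), q ((Fin.snoc ℓ' x : Fin (m+2) → Fin n) (p i))
            ((Fin.snoc ℓ' x : Fin (m+2) → Fin n) i.succ))
          = (∏ i : Fin m, q (ℓ' (p' i)) (ℓ' i.succ)) * q (ℓ' P') x := by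
        rw [Fin.prod_univ_castSucc]
        congr 1
        · refine Finset.prod_congr rfl fun i _ => ?_
          rw [← hp'cast i, Fin.snoc_castSucc, Fin.succ_castSucc, Fin.snoc_castSucc]
        · rw [← hPcast, Fin.snoc_castSucc, Fin.succ_last, Fin.snoc_last]
      rw [h0, hprod]
    have hsum := Fintype.sum_equiv (Fin.snocEquiv (fun _ : Fin (m+2) => Fin n))
      (fun w : Fin n × (Fin (m+1) → Fin n) =>
        if (Fin.snoc w.2 w.1 : Fin (m+2) → Fin n) 0 = v then
          ∏ i : Fin (m+1), q ((Fin.snoc w.2 w.1 : Fin (m+2) → Fin n) (p i))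
            ((Fin.snoc w.2 w.1 : Fin (m+2) → Fin n) i.succ) else 0)
      (fun ℓ : Fin (m+2) → Fin n =>
        if ℓ 0 = v then ∏ i : Fin (m+1), q (ℓ (p i)) (ℓ i.succ) else 0)
      (fun w => by rfl)
    rw [← hsum]
    rw [Fintype.sum_prod_type_right]
    have step : ∀ ℓ' : Fin (m+1) → Fin n,
        (∑ x : Fin n,
          if (Fin.snoc ℓ' x : Fin (m+2) → Fin n) 0 = v then
            ∏ i : Fin (m+1), q ((Fin.snoc ℓ' x : Fin (m+2) → Fin n) (p i))
              ((Fin.snoc ℓ' x : Fin (m+2) → Fin n) i.succ) else 0)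
        ≤ (if ℓ' 0 = v then (∏ i : Fin m, q (ℓ' (p' i)) (ℓ' i.succ)) else 0) * D := by
      intro ℓ'
      rw [Finset.sum_congr rfl fun x _ => key x ℓ']
      by_cases hv : ℓ' 0 = v
      · simp only [hv, if_true]
        rw [← Finset.mul_sum]
        exact mul_le_mul_of_nonneg_left (hrow _) (Finset.prod_nonneg fun i _ => hq0 _ _)
      · simp only [hv, if_neg, if_false]
        simp
    calc (∑ ℓ' : Fin (m+1) → Fin n, ∑ x : Fin n, _)
        ≤ ∑ ℓ' : Fin (m+1) → Fin n,
            (if ℓ' 0 = v then (∏ i : Fin m, q (ℓ' (p' i)) (ℓ' i.succ)) else 0) * D :=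
          Finset.sum_le_sum fun ℓ' _ => step ℓ'
      _ = (∑ ℓ' : Fin (m+1) → Fin n,
            (if ℓ' 0 = v then (∏ i : Fin m, q (ℓ' (p' i)) (ℓ' i.succ)) else 0)) * D := by
          rw [Finset.sum_mul]
      _ ≤ D ^ m * D := mul_le_mul_of_nonneg_right (ih v p' hp'le) hD
      _ = D ^ (m + 1) := by rw [pow_succ]

lemma walk_crossing {W : Type*} {H : SimpleGraph W} (B : Set W) {x y : W} (w : H.Walk x y) :
    x ∈ B → y ∉ B → ∃ a b, a ∈ B ∧ b ∉ B ∧ H.Adj a b := by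
  induction w with
  | nil => intro hx hy; exact absurd hx hy
  | @cons u v z h w ih =>
    intro hx hy
    by_cases hv : v ∈ B
    · exact ih hv hy
    · exact ⟨u, v, hx, hv, h⟩

lemma snoc_injective {m : ℕ} {α : Type*} {ℓ : Fin m → α} {x : α}
    (hℓ : Function.Injective ℓ) (hx : x ∉ Set.range ℓ) :
    Function.Injective (Fin.snoc ℓ x : Fin (m+1) → α) := by
  intro i j hij
  induction i using Fin.lastCases with
  | last =>
    induction j using Fin.lastCases with
    | last => rfl
    | cast j =>
      rw [Fin.snoc_last, Fin.snoc_castSucc] at hij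
      exact absurd ⟨j, hij.symm⟩ hx
  | cast i =>
    induction j using Fin.lastCases with
    | last =>
      rw [Fin.snoc_last, Fin.snoc_castSucc] at hij
      exact absurd ⟨i, hij⟩ hx
    | cast j =>
      rw [Fin.snoc_castSucc, Fin.snoc_castSucc] at hij
      rw [hℓ hij]

lemma exists_bfs {n : ℕ} (G : SimpleGraph (Fin n)) (S : Finset (Fin n))
    (hconn : (G.induce (S : Set (Fin n))).Connected) (v : Fin n) (hv : v ∈ S) :
    ∀ r : ℕ, r < S.card → ∃ (ℓ : Fin (r+1) → Fin n) (p : Fin r → Fin (r+1)),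
      Function.Injective ℓ ∧ (∀ i, ℓ i ∈ S) ∧ ℓ 0 = v ∧ Monotone p ∧
      (∀ i : Fin r, (p i : ℕ) ≤ (i : ℕ)) ∧
      (∀ i : Fin r, G.Adj (ℓ (p i)) (ℓ i.succ)) ∧
      (∀ u ∈ S, u ∉ Set.range ℓ → ∀ t : Fin (r+1), G.Adj (ℓ t) u →
        ∀ i : Fin r, (p i : ℕ) ≤ (t : ℕ)) := by
  intro r
  induction r with
  | zero =>
    intro _
    refine ⟨fun _ => v, fun i => i.elim0, ?_, fun _ => hv, rfl, ?_, ?_, ?_, ?_⟩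
    · intro a b _
      exact Fin.ext (by omega)
    · intro a b _
      exact a.elim0
    · exact fun i => i.elim0
    · exact fun i => i.elim0
    · exact fun _ _ _ _ _ i => i.elim0
  | succ r ih =>
    intro hr
    obtain ⟨ℓ, p, hinj, hmem, h0, hmono, hple, hadj, hinv⟩ := ih (by omega)
    -- there is a vertex of S outside the range of ℓ
    have hAcard : (Finset.image ℓ Finset.univ).card = r + 1 := by
      rw [Finset.card_image_of_injective _ hinj, Finset.card_univ, Fintype.card_fin]
    have hAsub : Finset.image ℓ Finset.univ ⊆ S := by
      intro y hy
      rw [Finset.mem_image] at hy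
      obtain ⟨i, -, rfl⟩ := hy
      exact hmem i
    have hex : ∃ y ∈ S, y ∉ Finset.image ℓ Finset.univ := by
      by_contra hcon
      push_neg at hcon
      have : S ⊆ Finset.image ℓ Finset.univ := fun y hy => hcon y hy
      have := Finset.card_le_card this
      omega
    obtain ⟨y, hyS, hyA⟩ := hex
    -- crossing edge via connectivity
    have hcross : ∃ a b, a ∈ S ∧ b ∈ S ∧ a ∈ Finset.image ℓ Finset.univ ∧
        b ∉ Finset.image ℓ Finset.univ ∧ G.Adj a b := by
      have hreach := hconn.preconnected ⟨v, hv⟩ ⟨y, hyS⟩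
      obtain ⟨w⟩ := hreach
      have := walk_crossing {z : (S : Set (Fin n)) | (z : Fin n) ∈ Finset.image ℓ Finset.univ} w
        (by
          simp only [Set.mem_setOf_eq, Finset.mem_image]
          exact ⟨0, Finset.mem_univ 0, h0⟩)
        (by simpa using hyA)
      obtain ⟨a, b, ha, hb, hab⟩ := this
      exact ⟨a, b, a.2, b.2, ha, hb, hab⟩
    obtain ⟨a, b, haS, hbS, haA, hbA, hab⟩ := hcross
    -- the set of indices with a crossing edge
    set T : Finset (Fin (r+1)) := Finset.univ.filter
      (fun t => ∃ u, u ∈ S ∧ u ∉ Set.range ℓ ∧ G.Adj (ℓ t) u) with hT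
    have hbR : b ∉ Set.range ℓ := by
      intro ⟨i, hi⟩
      exact hbA (Finset.mem_image.mpr ⟨i, Finset.mem_univ i, hi⟩)
    have hTne : T.Nonempty := by
      rw [Finset.mem_image] at haA
      obtain ⟨t, -, ht⟩ := haA
      exact ⟨t, by rw [hT, Finset.mem_filter]; exact ⟨Finset.mem_univ t, b, hbS, hbR, ht ▸ hab⟩⟩
    set t0 : Fin (r+1) := T.min' hTne with ht0
    have ht0T : t0 ∈ T := T.min'_mem hTne
    rw [hT, Finset.mem_filter] at ht0T
    obtain ⟨-, u0, hu0S, hu0R, hu0adj⟩ := ht0T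
    -- minimality of t0
    have ht0min : ∀ t : Fin (r+1), (∃ u, u ∈ S ∧ u ∉ Set.range ℓ ∧ G.Adj (ℓ t) u) →
        (t0 : ℕ) ≤ (t : ℕ) :=
      fun t ht => T.min'_le t (by rw [hT, Finset.mem_filter]; exact ⟨Finset.mem_univ t, ht⟩)
    -- new data
    refine ⟨Fin.snoc ℓ u0, Fin.snoc (fun i => (p i).castSucc) t0.castSucc, ?_, ?_, ?_, ?_, ?_, ?_, ?_⟩
    · exact snoc_injective hinj hu0R
    · intro i
      induction i using Fin.lastCases with
      | last => rw [Fin.snoc_last]; exact hu0S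
      | cast i => rw [Fin.snoc_castSucc]; exact hmem i
    · rw [show (0 : Fin (r+2)) = Fin.castSucc 0 by rfl, Fin.snoc_castSucc]; exact h0
    · -- monotone
      intro i j hij
      induction i using Fin.lastCases with
      | last =>
        induction j using Fin.lastCases with
        | last => exact le_refl _
        | cast j =>
          exfalso
          have h1 : (Fin.last r : ℕ) ≤ ((Fin.castSucc j : Fin (r+1)) : ℕ) := hij
          simp only [Fin.val_last, Fin.coe_castSucc] at h1
          have := j.isLt
          omega
      | cast i =>
        induction j using Fin.lastCases with
        | last =>
          rw [Fin.snoc_castSucc, Fin.snoc_last]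
          rw [Fin.le_def]
          simp only [Fin.coe_castSucc]
          exact hinv u0 hu0S hu0R t0 hu0adj i
        | cast j =>
          rw [Fin.snoc_castSucc, Fin.snoc_castSucc]
          rw [Fin.le_def]
          simp only [Fin.coe_castSucc]
          have : p i ≤ p j := hmono (by
            rw [Fin.le_def]
            have h1 : ((Fin.castSucc i : Fin (r+1)) : ℕ) ≤ ((Fin.castSucc j : Fin (r+1)) : ℕ) := hij
            simpa using h1)
          exact this
    · -- p' i ≤ i
      intro i
      induction i using Fin.lastCases with
      | last =>
        rw [Fin.snoc_last]
        simp only [Fin.coe_castSucc, Fin.val_last]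
        have := t0.isLt
        omega
      | cast i =>
        rw [Fin.snoc_castSucc]
        simp only [Fin.coe_castSucc]
        exact hple i
    · -- adjacency
      intro i
      induction i using Fin.lastCases with
      | last =>
        rw [Fin.snoc_last, Fin.snoc_castSucc, Fin.succ_last, Fin.snoc_last]
        exact hu0adj
      | cast i =>
        rw [Fin.snoc_castSucc, Fin.snoc_castSucc, Fin.succ_castSucc, Fin.snoc_castSucc]
        exact hadj i
    · -- invariant
      intro u huS huR t hadj' i
      have huRold : u ∉ Set.range ℓ := by
        intro ⟨s, hs⟩
        exact huR ⟨s.castSucc, by rw [Fin.snoc_castSucc]; exact hs⟩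
      induction t using Fin.lastCases with
      | last =>
        -- t = last, any p' i has value ≤ r+1
        induction i using Fin.lastCases with
        | last =>
          rw [Fin.snoc_last]
          simp only [Fin.coe_castSucc, Fin.val_last]
          have := t0.isLt; omega
        | cast i =>
          rw [Fin.snoc_castSucc]
          simp only [Fin.coe_castSucc, Fin.val_last]
          have := (p i).isLt; omega
      | cast s =>
        rw [Fin.snoc_castSucc] at hadj'
        have hs : ∀ i' : Fin r, (p i' : ℕ) ≤ (s : ℕ) := hinv u huS huRold s hadj'
        have hts : (t0 : ℕ) ≤ (s : ℕ) := ht0min s ⟨u, huS, huRold, hadj'⟩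
        induction i using Fin.lastCases with
        | last =>
          rw [Fin.snoc_last]
          simpa using hts
        | cast i =>
          rw [Fin.snoc_castSucc]
          simpa using hs i

lemma count_le_pairs {n k m : ℕ} (η : Sym2 (Fin n) → Bool) (v : Fin n) :
    (Finset.univ.filter fun S : Finset (Fin n) =>
        v ∈ S ∧ S.card = m + 1 ∧ connectedSet (nwGraph n k η) S).card
    ≤ (Finset.univ.filter fun w : (Fin m → Fin (m+1)) × (Fin (m+1) → Fin n) =>
        Monotone w.1 ∧ (∀ i : Fin m, (w.1 i : ℕ) ≤ (i:ℕ)) ∧ Function.Injective w.2 ∧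
        w.2 0 = v ∧
        ∀ i : Fin m, (nwGraph n k η).Adj (w.2 (w.1 i)) (w.2 i.succ)).card := by
  set G := nwGraph n k η with hG
  set s := Finset.univ.filter fun S : Finset (Fin n) =>
    v ∈ S ∧ S.card = m + 1 ∧ connectedSet G S with hs
  set t := Finset.univ.filter fun w : (Fin m → Fin (m+1)) × (Fin (m+1) → Fin n) =>
    Monotone w.1 ∧ (∀ i : Fin m, (w.1 i : ℕ) ≤ (i:ℕ)) ∧ Function.Injective w.2 ∧
    w.2 0 = v ∧ ∀ i : Fin m, G.Adj (w.2 (w.1 i)) (w.2 i.succ) with ht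
  have hex : ∀ S : Finset (Fin n), ∃ w : (Fin m → Fin (m+1)) × (Fin (m+1) → Fin n),
      S ∈ s → w ∈ t ∧ Finset.image w.2 Finset.univ = S := by
    intro S
    by_cases hS : S ∈ s
    swap
    · exact ⟨⟨fun _ => 0, fun _ => v⟩, fun h => absurd h hS⟩
    rw [hs, Finset.mem_filter] at hS
    obtain ⟨-, hvS, hcard, hconn⟩ := hS
    obtain ⟨ℓ, p, hinj, hmem, h0, hmono, hple, hadj, -⟩ :=
      exists_bfs G S hconn v hvS m (by omega)
    refine ⟨⟨p, ℓ⟩, fun _ => ⟨?_, ?_⟩⟩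
    · rw [ht, Finset.mem_filter]
      exact ⟨Finset.mem_univ _, hmono, hple, hinj, h0, hadj⟩
    · apply Finset.eq_of_subset_of_card_le
      · intro y hy
        rw [Finset.mem_image] at hy
        obtain ⟨i, -, rfl⟩ := hy
        exact hmem i
      · rw [Finset.card_image_of_injective _ hinj, Finset.card_univ, Fintype.card_fin]
        omega
  refine Finset.card_le_card_of_injOn (fun S => Classical.choose (hex S)) ?_ ?_
  · intro S hS
    exact (Classical.choose_spec (hex S) hS).1
  · intro S₁ hS₁ S₂ hS₂ heq
    have h1 := (Classical.choose_spec (hex S₁) hS₁).2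
    have h2 := (Classical.choose_spec (hex S₂) hS₂).2
    rw [← h1, ← h2]
    exact congrArg (fun w : (Fin m → Fin (m+1)) × (Fin (m+1) → Fin n) =>
      Finset.image w.2 Finset.univ) heq

/-- counting monotone maps -/

lemma card_mono_le {m : ℕ} :
    ((Finset.univ.filter fun p : Fin m → Fin (m+1) =>
      Monotone p ∧ (∀ i : Fin m, (p i : ℕ) ≤ (i:ℕ))).card : ℝ) ≤ 2 ^ (2*m+1) := by
  have : (Finset.univ.filter fun p : Fin m → Fin (m+1) =>
      Monotone p ∧ (∀ i : Fin m, (p i : ℕ) ≤ (i:ℕ))).card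
      ≤ (Finset.univ : Finset (Finset (Fin (2*m+1)))).card := by
    refine Finset.card_le_card_of_injOn
      (fun p => Finset.image (fun i : Fin m =>
        (⟨(p i : ℕ) + (i : ℕ), by have := (p i).isLt; have := i.isLt; omega⟩ : Fin (2*m+1)))
        Finset.univ)
      (fun _ _ => Finset.mem_univ _) ?_
    intro p hp p' hp' heq
    rw [Finset.mem_coe, Finset.mem_filter] at hp hp'
    have hsm : ∀ (r : Fin m → Fin (m+1)), Monotone r → StrictMono (fun i : Fin m =>
        (⟨(r i : ℕ) + (i : ℕ), by have := (r i).isLt; have := i.isLt; omega⟩ : Fin (2*m+1))) := by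
      intro r hr i j hij
      have h1 : (r i : ℕ) ≤ (r j : ℕ) := hr (le_of_lt hij)
      have h2 : (i : ℕ) < (j : ℕ) := hij
      rw [Fin.lt_def]
      simp only
      omega
    have hrange := congrArg (fun (x : Finset (Fin (2*m+1))) => (x : Set (Fin (2*m+1)))) heq
    simp only [Finset.coe_image, Finset.coe_univ, Set.image_univ] at hrange
    haveI : WellFoundedLT (Fin m) := inferInstance
    have := (StrictMono.range_inj (β := Fin m) (γ := Fin (2*m+1))
      (hsm p hp.2.1) (hsm p' hp'.2.1)).mp hrange
    funext i
    have := congrFun this i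
    apply Fin.ext
    have h3 : (p i : ℕ) + (i : ℕ) = (p' i : ℕ) + (i : ℕ) := congrArg Fin.val this
    omega
  calc ((Finset.univ.filter fun p : Fin m → Fin (m+1) =>
      Monotone p ∧ (∀ i : Fin m, (p i : ℕ) ≤ (i:ℕ))).card : ℝ)
      ≤ ((Finset.univ : Finset (Finset (Fin (2*m+1)))).card : ℝ) := by exact_mod_cast this
    _ = 2 ^ (2*m+1) := by
      rw [Finset.card_univ, Fintype.card_finset, Fintype.card_fin]
      norm_num

lemma ite_inst {α : Sort*} {P : Prop} (i1 i2 : Decidable P) (x y : α) :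
    @ite α P i1 x y = @ite α P i2 x y := by
  rw [Subsingleton.elim i1 i2]

lemma exp_v_le (c : ℝ) (hc : 0 < c) (k : ℕ) (hk : 1 ≤ k) (n : ℕ) (hn : c < (n:ℝ))
    (m : ℕ) (v : Fin n) :
    nwExp n (c / n) (fun η =>
      ((Finset.univ.filter fun S : Finset (Fin n) =>
        v ∈ S ∧ S.card = m + 1 ∧ connectedSet (nwGraph n k η) S).card : ℝ)) ≤
      (4 * (c + 2 * k)) ^ (m+1) := by
  have hn0 : (0:ℝ) < n := lt_trans hc hn
  have h0 : 0 ≤ c / (n:ℝ) := div_nonneg hc.le hn0.le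
  have h1 : c / (n:ℝ) ≤ 1 := by
    rw [div_le_one hn0]
    exact hn.le
  have hw : ∀ η : Sym2 (Fin n) → Bool, 0 ≤ nwWeight n (c / n) η := nwWeight_nonneg h0 h1
  have hDnn : (0:ℝ) ≤ 2 * k + c := by
    have : (0:ℝ) ≤ (k:ℝ) := Nat.cast_nonneg k
    linarith
  have hrow : ∀ x : Fin n, ∑ y, qwt n k (c / n) x y ≤ 2 * k + c := by
    intro x
    have h := qwt_row_sum (n := n) (k := k) h0 x
    rwa [mul_div_cancel₀ c (ne_of_gt hn0)] at h
  have hQnn : ∀ w : (Fin m → Fin (m+1)) × (Fin (m+1) → Fin n),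
      (0:ℝ) ≤ ∏ i : Fin m, qwt n k (c / n) (w.2 (w.1 i)) (w.2 i.succ) :=
    fun w => Finset.prod_nonneg fun i _ => qwt_nonneg h0 _ _
  have step1 : nwExp n (c / n) (fun η =>
      ((Finset.univ.filter fun S : Finset (Fin n) =>
        v ∈ S ∧ S.card = m + 1 ∧ connectedSet (nwGraph n k η) S).card : ℝ))
      ≤ ∑ η : Sym2 (Fin n) → Bool, nwWeight n (c / n) η *
          ∑ w : (Fin m → Fin (m+1)) × (Fin (m+1) → Fin n),
            (if (Monotone w.1 ∧ (∀ i : Fin m, (w.1 i : ℕ) ≤ (i:ℕ)) ∧ Function.Injective w.2 ∧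
                w.2 0 = v) then (1:ℝ) else 0) *
            (if (∀ i : Fin m, (nwGraph n k η).Adj (w.2 (w.1 i)) (w.2 i.succ)) then (1:ℝ) else 0) := by
    unfold nwExp
    refine Finset.sum_le_sum fun η _ => ?_
    refine mul_le_mul_of_nonneg_left ?_ (hw η)
    beta_reduce
    have hcount := count_le_pairs (n := n) (k := k) (m := m) η v
    have hcard : ((Finset.univ.filter fun w : (Fin m → Fin (m+1)) × (Fin (m+1) → Fin n) =>
        Monotone w.1 ∧ (∀ i : Fin m, (w.1 i : ℕ) ≤ (i:ℕ)) ∧ Function.Injective w.2 ∧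
        w.2 0 = v ∧
        ∀ i : Fin m, (nwGraph n k η).Adj (w.2 (w.1 i)) (w.2 i.succ)).card : ℝ)
        = ∑ w : (Fin m → Fin (m+1)) × (Fin (m+1) → Fin n),
            (if (Monotone w.1 ∧ (∀ i : Fin m, (w.1 i : ℕ) ≤ (i:ℕ)) ∧ Function.Injective w.2 ∧
                w.2 0 = v) then (1:ℝ) else 0) *
            (if (∀ i : Fin m, (nwGraph n k η).Adj (w.2 (w.1 i)) (w.2 i.succ)) then (1:ℝ) else 0) := by
      rw [Finset.card_filter]
      push_cast
      refine Finset.sum_congr rfl fun w _ => ?_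
      by_cases hs : Monotone w.1 ∧ (∀ i : Fin m, (w.1 i : ℕ) ≤ (i:ℕ)) ∧ Function.Injective w.2 ∧
          w.2 0 = v
      · by_cases ha : ∀ i : Fin m, (nwGraph n k η).Adj (w.2 (w.1 i)) (w.2 i.succ)
        · rw [if_pos ⟨hs.1, hs.2.1, hs.2.2.1, hs.2.2.2, ha⟩, if_pos hs, if_pos ha]; try norm_num
        · rw [if_neg (by rintro ⟨-, -, -, -, h⟩; exact ha h), if_pos hs, if_neg ha]; try norm_num
      · rw [if_neg (by rintro ⟨h1', h2', h3', h4', -⟩; exact hs ⟨h1', h2', h3', h4'⟩),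
          if_neg hs]; try norm_num
    rw [← hcard]
    exact_mod_cast hcount
  have step2 : (∑ η : Sym2 (Fin n) → Bool, nwWeight n (c / n) η *
          ∑ w : (Fin m → Fin (m+1)) × (Fin (m+1) → Fin n),
            (if(Monotone w.1 ∧ (∀ i : Fin m, (w.1 i : ℕ) ≤ (i:ℕ)) ∧ Function.Injective w.2 ∧
                w.2 0 = v) then (1:ℝ) else 0) *
            (if (∀ i : Fin m, (nwGraph n k η).Adj (w.2 (w.1 i)) (w.2 i.succ)) then (1:ℝ) else 0))
      = ∑ w : (Fin m → Fin (m+1)) × (Fin (m+1) → Fin n),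
          (if (Monotone w.1 ∧ (∀ i : Fin m, (w.1 i : ℕ) ≤ (i:ℕ)) ∧ Function.Injective w.2 ∧
              w.2 0 = v) then (1:ℝ) else 0) *
          nwPr n (c / n) (fun η => ∀ i : Fin m, (nwGraph n k η).Adj (w.2 (w.1 i)) (w.2 i.succ)) := by
    have e_inner : ∀ η : Sym2 (Fin n) → Bool, nwWeight n (c / n) η *
        ∑ w : (Fin m → Fin (m+1)) × (Fin (m+1) → Fin n),
          (if (Monotone w.1 ∧ (∀ i : Fin m, (w.1 i : ℕ) ≤ (i:ℕ)) ∧ Function.Injective w.2 ∧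
              w.2 0 = v) then (1:ℝ) else 0) *
          (if (∀ i : Fin m, (nwGraph n k η).Adj (w.2 (w.1 i)) (w.2 i.succ)) then (1:ℝ) else 0)
        = ∑ w : (Fin m → Fin (m+1)) × (Fin (m+1) → Fin n),
          (if (Monotone w.1 ∧ (∀ i : Fin m, (w.1 i : ℕ) ≤ (i:ℕ)) ∧ Function.Injective w.2 ∧
              w.2 0 = v) then (1:ℝ) else 0) *
          (if (∀ i : Fin m, (nwGraph n k η).Adj (w.2 (w.1 i)) (w.2 i.succ))
            then nwWeight n (c / n) η else 0) := by
      intro η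
      rw [Finset.mul_sum]
      refine Finset.sum_congr rfl fun w _ => ?_
      by_cases ha : ∀ i : Fin m, (nwGraph n k η).Adj (w.2 (w.1 i)) (w.2 i.succ)
      · rw [if_pos ha, if_pos ha]; ring
      · rw [if_neg ha, if_neg ha]; ring
    calc _ = ∑ η : Sym2 (Fin n) → Bool,
          ∑ w : (Fin m → Fin (m+1)) × (Fin (m+1) → Fin n),
          (if (Monotone w.1 ∧ (∀ i : Fin m, (w.1 i : ℕ) ≤ (i:ℕ)) ∧ Function.Injective w.2 ∧
              w.2 0 = v) then (1:ℝ) else 0) *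
          (if (∀ i : Fin m, (nwGraph n k η).Adj (w.2 (w.1 i)) (w.2 i.succ))
            then nwWeight n (c / n) η else 0) :=
        Finset.sum_congr rfl fun η _ => e_inner η
      _ = ∑ w : (Fin m → Fin (m+1)) × (Fin (m+1) → Fin n),
          ∑ η : Sym2 (Fin n) → Bool,
          (if (Monotone w.1 ∧ (∀ i : Fin m, (w.1 i : ℕ) ≤ (i:ℕ)) ∧ Function.Injective w.2 ∧
              w.2 0 = v) then (1:ℝ) else 0) *
          (if (∀ i : Fin m, (nwGraph n k η).Adj (w.2 (w.1 i)) (w.2 i.succ))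
            then nwWeight n (c / n) η else 0) := Finset.sum_comm
      _ = _ := by
        refine Finset.sum_congr rfl fun w _ => ?_
        unfold nwPr
        beta_reduce
        rw [← Finset.mul_sum]
        exact congrArg _ (Finset.sum_congr rfl fun η _ => ite_inst _ _ _ _)
  have step3 : (∑ w : (Fin m → Fin (m+1)) × (Fin (m+1) → Fin n),
          (if (Monotone w.1 ∧ (∀ i : Fin m, (w.1 i : ℕ) ≤ (i:ℕ)) ∧ Function.Injective w.2 ∧
              w.2 0 = v) then (1:ℝ) else 0) *
          nwPr n (c / n) (fun η => ∀ i : Fin m, (nwGraph n k η).Adj (w.2 (w.1 i)) (w.2 i.succ)))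
      ≤ ∑ w : (Fin m → Fin (m+1)) × (Fin (m+1) → Fin n),
          (if (Monotone w.1 ∧ (∀ i : Fin m, (w.1 i : ℕ) ≤ (i:ℕ))) then (1:ℝ) else 0) *
          (if w.2 0 = v then ∏ i : Fin m, qwt n k (c / n) (w.2 (w.1 i)) (w.2 i.succ) else 0) := by
    refine Finset.sum_le_sum fun w _ => ?_
    by_cases hs : Monotone w.1 ∧ (∀ i : Fin m, (w.1 i : ℕ) ≤ (i:ℕ)) ∧ Function.Injective w.2 ∧
        w.2 0 = v
    · rw [if_pos hs, one_mul, if_pos ⟨hs.1, hs.2.1⟩, one_mul, if_pos hs.2.2.2]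
      exact nwPr_adj_le h0 h1 (fun i => w.2 (w.1 i)) (fun i => w.2 i.succ)
        (tree_edges_inj w.1 hs.1 w.2 hs.2.2.1)
    · rw [if_neg hs, zero_mul]
      have h2 : (0:ℝ) ≤ if w.2 0 = v then
          ∏ i : Fin m, qwt n k (c / n) (w.2 (w.1 i)) (w.2 i.succ) else 0 := by
        split
        · exact hQnn w
        · exact le_refl 0
      have h3 : (0:ℝ) ≤ if (Monotone w.1 ∧ ∀ i : Fin m, (w.1 i : ℕ) ≤ (i:ℕ)) then (1:ℝ) else 0 := by
        split
        · exact zero_le_one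
        · exact le_refl 0
      exact mul_nonneg h3 h2
  have step5 : (∑ w : (Fin m → Fin (m+1)) × (Fin (m+1) → Fin n),
          (if (Monotone w.1 ∧ (∀ i : Fin m, (w.1 i : ℕ) ≤ (i:ℕ))) then (1:ℝ) else 0) *
          (if w.2 0 = v then ∏ i : Fin m, qwt n k (c / n) (w.2 (w.1 i)) (w.2 i.succ) else 0))
      ≤ ((Finset.univ.filter fun p : Fin m → Fin (m+1) =>
          Monotone p ∧ (∀ i : Fin m, (p i : ℕ) ≤ (i:ℕ))).card : ℝ) * (2 * k + c) ^ m := by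
    rw [Fintype.sum_prod_type]
    dsimp only
    have hinner : ∀ p : Fin m → Fin (m+1),
        (∑ ℓ : Fin (m+1) → Fin n,
          (if (Monotone p ∧ ∀ i : Fin m, (p i : ℕ) ≤ (i:ℕ)) then (1:ℝ) else 0)
          * (if ℓ 0 = v then ∏ i : Fin m, qwt n k (c / n) (ℓ (p i)) (ℓ i.succ) else 0))
        ≤ (if (Monotone p ∧ ∀ i : Fin m, (p i : ℕ) ≤ (i:ℕ)) then (1:ℝ) else 0) * (2 * k + c) ^ m := by
      intro p
      by_cases hmp : Monotone p ∧ ∀ i : Fin m, (p i : ℕ) ≤ (i:ℕ)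
      · rw [if_pos hmp]
        simp only [one_mul]
        exact sum_prod_chain (qwt n k (c / n)) (fun x y => qwt_nonneg h0 x y)
          (2 * k + c) hrow hDnn m v p hmp.2
      · rw [if_neg hmp]
        simp only [zero_mul]
        rw [Finset.sum_const_zero]
    calc (∑ p : Fin m → Fin (m+1), ∑ ℓ : Fin (m+1) → Fin n,
          (if (Monotone p ∧ ∀ i : Fin m, (p i : ℕ) ≤ (i:ℕ)) then (1:ℝ) else 0)
          * (if ℓ 0 = v then ∏ i : Fin m, qwt n k (c / n) (ℓ (p i)) (ℓ i.succ) else 0))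
        ≤ ∑ p : Fin m → Fin (m+1),
            (if (Monotone p ∧ ∀ i : Fin m, (p i : ℕ) ≤ (i:ℕ)) then (1:ℝ) else 0) * (2 * k + c) ^ m :=
          Finset.sum_le_sum fun p _ => hinner p
      _ = (∑ p : Fin m → Fin (m+1),
            (if (Monotone p ∧ ∀ i : Fin m, (p i : ℕ) ≤ (i:ℕ)) then (1:ℝ) else 0)) * (2 * k + c) ^ m := by
          rw [Finset.sum_mul]
      _ = ((Finset.univ.filter fun p : Fin m → Fin (m+1) =>
          Monotone p ∧ (∀ i : Fin m, (p i : ℕ) ≤ (i:ℕ))).card : ℝ) * (2 * k + c) ^ m := by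
          rw [Finset.sum_boole]
  have step6 : ((Finset.univ.filter fun p : Fin m → Fin (m+1) =>
          Monotone p ∧ (∀ i : Fin m, (p i : ℕ) ≤ (i:ℕ))).card : ℝ) * (2 * k + c) ^ m
      ≤ (4 * (c + 2 * k)) ^ (m+1) := by
    have hk1 : (1:ℝ) ≤ (k:ℝ) := by exact_mod_cast hk
    have hbase : (1:ℝ) ≤ c + 2 * k := by linarith
    have hDeq : (2 * (k:ℝ) + c) = c + 2 * k := by ring
    have hmono := card_mono_le (m := m)
    have hb1 : ((Finset.univ.filter fun p : Fin m → Fin (m+1) =>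
          Monotone p ∧ (∀ i : Fin m, (p i : ℕ) ≤ (i:ℕ))).card : ℝ) * (2 * k + c) ^ m
        ≤ (2:ℝ) ^ (2*m+1) * (c + 2*k) ^ m := by
      rw [hDeq]
      exact mul_le_mul_of_nonneg_right hmono (pow_nonneg (by linarith) m)
    refine hb1.trans ?_
    have h4 : (4 * (c + 2 * k)) ^ (m+1) = 4 ^ (m+1) * (c + 2*k) ^ (m+1) := mul_pow _ _ _
    rw [h4]
    have e1 : (4:ℝ) ^ (m+1) = 2 ^ (2*m+2) := by
      rw [show (4:ℝ) = 2^2 by norm_num, ← pow_mul, show 2*(m+1) = 2*m+2 by omega]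
    rw [e1]
    have l1 : (2:ℝ) ^ (2*m+1) ≤ 2 ^ (2*m+2) := by
      apply pow_le_pow_right₀ (by norm_num)
      omega
    have l2 : (c + 2*k) ^ m ≤ (c + 2*k) ^ (m+1) := by
      apply pow_le_pow_right₀ hbase
      omega
    exact mul_le_mul l1 l2 (pow_nonneg (by linarith) m) (pow_nonneg (by norm_num) (2*m+2))
  exact step1.trans (step2.trans_le (step3.trans (step5.trans step6)))

/-- **Proposition (counting connected subgraphs).** Let `p = c/n` (with `0 < c < n`) and let `H`
be an `(n,k,p)` Newman–Watts small world. For any positive integer `j` and any vertex `v`,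
the expected number of connected sets of size `j` containing `v` is at most `(4(c+2k))^j`, and
the expected number of connected sets of size `j` is at most `n·(4(c+2k))^j`. -/
theorem expected_number_connected_subsets (c : ℝ) (hc : 0 < c) (k : ℕ) (hk : 1 ≤ k)
    (n : ℕ) (hn : c < n) (j : ℕ) (hj : 1 ≤ j) :
    (∀ v : Fin n,
      nwExp n (c / n) (fun η =>
        ((Finset.univ.filter fun S : Finset (Fin n) =>
          v ∈ S ∧ S.card = j ∧ connectedSet (nwGraph n k η) S).card : ℝ)) ≤
        (4 * (c + 2 * k)) ^ j) ∧
    nwExp n (c / n) (fun η =>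
      ((Finset.univ.filter fun S : Finset (Fin n) =>
        S.card = j ∧ connectedSet (nwGraph n k η) S).card : ℝ)) ≤
      n * (4 * (c + 2 * k)) ^ j := by
  obtain ⟨m, rfl⟩ : ∃ m, j = m + 1 := ⟨j - 1, by omega⟩
  have hn0 : (0:ℝ) < n := lt_trans hc hn
  have h0 : 0 ≤ c / (n:ℝ) := div_nonneg hc.le hn0.le
  have h1 : c / (n:ℝ) ≤ 1 := by rw [div_le_one hn0]; exact hn.le
  have hw : ∀ η : Sym2 (Fin n) → Bool, 0 ≤ nwWeight n (c / n) η := nwWeight_nonneg h0 h1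
  have hpart1 : ∀ v : Fin n,
      nwExp n (c / n) (fun η =>
        ((Finset.univ.filter fun S : Finset (Fin n) =>
          v ∈ S ∧ S.card = m + 1 ∧ connectedSet (nwGraph n k η) S).card : ℝ)) ≤
        (4 * (c + 2 * k)) ^ (m+1) := fun v => exp_v_le c hc k hk n hn m v
  refine ⟨hpart1, ?_⟩
  -- counting: every connected set of size m+1 contains at least one vertex
  have hcount : ∀ η : Sym2 (Fin n) → Bool,
      (Finset.univ.filter fun S : Finset (Fin n) =>
        S.card = m + 1 ∧ connectedSet (nwGraph n k η) S).card
      ≤ ∑ v : Fin n, (Finset.univ.filter fun S : Finset (Fin n) =>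
          v ∈ S ∧ S.card = m + 1 ∧ connectedSet (nwGraph n k η) S).card := by
    intro η
    have e1 : ∀ v : Fin n, (Finset.univ.filter fun S : Finset (Fin n) =>
        v ∈ S ∧ S.card = m + 1 ∧ connectedSet (nwGraph n k η) S).card
        = ∑ S : Finset (Fin n),
          if v ∈ S ∧ S.card = m + 1 ∧ connectedSet (nwGraph n k η) S then 1 else 0 :=
      fun v => Finset.card_filter _ _
    rw [Finset.sum_congr rfl fun v _ => e1 v, Finset.sum_comm]
    have e2 : ∀ S : Finset (Fin n),
        (∑ v : Fin n, if v ∈ S ∧ S.card = m + 1 ∧ connectedSet (nwGraph n k η) S then 1 else 0)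
        = if S.card = m + 1 ∧ connectedSet (nwGraph n k η) S then S.card else 0 := by
      intro S
      by_cases hp : S.card = m + 1 ∧ connectedSet (nwGraph n k η) S
      · rw [if_pos hp]
        have : ∀ v : Fin n, (if v ∈ S ∧ S.card = m + 1 ∧ connectedSet (nwGraph n k η) S
            then 1 else 0) = if v ∈ S then 1 else 0 := by
          intro v
          by_cases hv : v ∈ S
          · rw [if_pos ⟨hv, hp⟩, if_pos hv]
          · rw [if_neg (by rintro ⟨h, -⟩; exact hv h), if_neg hv]
        rw [Finset.sum_congr rfl fun v _ => this v, Finset.sum_boole, Finset.filter_univ_mem]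
        simp
      · rw [if_neg hp]
        refine Finset.sum_eq_zero fun v _ => ?_
        rw [if_neg (by rintro ⟨-, h⟩; exact hp h)]
    rw [Finset.sum_congr rfl fun S _ => e2 S]
    rw [Finset.card_filter]
    refine Finset.sum_le_sum fun S _ => ?_
    by_cases hp : S.card = m + 1 ∧ connectedSet (nwGraph n k η) S
    · rw [if_pos hp, if_pos hp]
      omega
    · rw [if_neg hp, if_neg hp]
  calc nwExp n (c / n) (fun η =>
      ((Finset.univ.filter fun S : Finset (Fin n) =>
        S.card = m + 1 ∧ connectedSet (nwGraph n k η) S).card : ℝ))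
      ≤ ∑ η : Sym2 (Fin n) → Bool, nwWeight n (c / n) η *
          ∑ v : Fin n, ((Finset.univ.filter fun S : Finset (Fin n) =>
            v ∈ S ∧ S.card = m + 1 ∧ connectedSet (nwGraph n k η) S).card : ℝ) := by
        unfold nwExp
        refine Finset.sum_le_sum fun η _ => ?_
        refine mul_le_mul_of_nonneg_left ?_ (hw η)
        beta_reduce
        exact_mod_cast hcount η
    _ = ∑ v : Fin n, nwExp n (c / n) (fun η =>
          ((Finset.univ.filter fun S : Finset (Fin n) =>
            v ∈ S ∧ S.card = m + 1 ∧ connectedSet (nwGraph n k η) S).card : ℝ)) := by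
        unfold nwExp
        rw [Finset.sum_congr rfl fun η _ => Finset.mul_sum _ _ _, Finset.sum_comm]
    _ ≤ ∑ v : Fin n, (4 * (c + 2 * k)) ^ (m+1) :=
        Finset.sum_le_sum fun v _ => hpart1 v
    _ = n * (4 * (c + 2 * k)) ^ (m+1) := by
        rw [Finset.sum_const, Finset.card_univ, Fintype.card_fin, nsmul_eq_mul]

end
end

section
/- (Lagrange inversion formula.) Let G be a formal power series over a commutative ℚ-algebra (e.g. over ℝ), and let f be a formal power series with zero constant term satisfying f(x) = x·G(f(x)). Then for all integers n ≥ k ≥ 1, n·[x^n] f(x)^k = k·[x^{n−k}] G(x)^n, where [x^m] F denotes the coefficient of x^m in the power series F. -/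
open scoped Classical

noncomputable section

/-- Composition (substitution) `G(f)` of formal power series, valid when `f` has zero constant
term: the coefficient of `x^r` in `G(f)` is `Σ_{j=0}^{r} ([x^j]G) · [x^r](f^j)` (higher powers of
`f` contribute nothing to the coefficient of `x^r` since `f` has zero constant term). -/
def psComp {R : Type*} [CommSemiring R] (G f : PowerSeries R) : PowerSeries R :=
  PowerSeries.mk fun r =>
    ∑ j ∈ Finset.range (r + 1), PowerSeries.coeff j G * PowerSeries.coeff r (f ^ j)

namespace LagrangeAux

open PowerSeries Finset

variable {R : Type} [CommRing R]

lemma coeff_psComp (G f : PowerSeries R) (r : ℕ) :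
    coeff r (psComp G f) = ∑ j ∈ range (r + 1), coeff j G * coeff r (f ^ j) :=
  coeff_mk _ _

lemma coeff_pow_f_eq_zero (f W : PowerSeries R) (hfW : f = PowerSeries.X * W)
    {r j : ℕ} (h : r < j) : coeff r (f ^ j) = 0 := by
  rw [hfW, mul_pow, coeff_X_pow_mul', if_neg (not_le.mpr h)]

lemma coeff_pow_f_shift (f W : PowerSeries R) (hfW : f = PowerSeries.X * W)
    (m j : ℕ) : coeff (m + j) (f ^ j) = coeff m (W ^ j) := by
  rw [hfW, mul_pow]
  exact coeff_X_pow_mul (W ^ j) j m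

lemma sum_triangle (m : ℕ) (t : ℕ × ℕ → R) (ht : ∀ p : ℕ × ℕ, m < p.1 + p.2 → t p = 0) :
    ∑ j ∈ range (m + 1), ∑ p ∈ Finset.HasAntidiagonal.antidiagonal j, t p
      = ∑ p ∈ range (m + 1) ×ˢ range (m + 1), t p := by
  rw [← Finset.sum_biUnion]
  · apply Finset.sum_subset
    · intro p hp
      simp only [Finset.mem_biUnion, Finset.mem_range, Finset.HasAntidiagonal.mem_antidiagonal] at hp
      obtain ⟨j, hj, hpj⟩ := hp
      simp only [Finset.mem_product, Finset.mem_range]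
      omega
    · intro p hp hnp
      apply ht
      by_contra h
      push_neg at h
      exact hnp (Finset.mem_biUnion.mpr ⟨p.1 + p.2, Finset.mem_range.mpr (by omega),
        Finset.HasAntidiagonal.mem_antidiagonal.mpr rfl⟩)
  · intro a _ b _ hab
    simp only [Function.onFun, Finset.disjoint_left]
    intro p hpa hpb
    exact hab (by rw [← Finset.HasAntidiagonal.mem_antidiagonal.mp hpa, ← Finset.HasAntidiagonal.mem_antidiagonal.mp hpb])

lemma psComp_mul (f W : PowerSeries R) (hfW : f = PowerSeries.X * W) (H1 H2 : PowerSeries R) :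
    psComp (H1 * H2) f = psComp H1 f * psComp H2 f := by
  ext m
  have hext : ∀ r, r ≤ m → ∀ H : PowerSeries R,
      coeff r (psComp H f) = ∑ j ∈ range (m + 1), coeff j H * coeff r (f ^ j) := by
    intro r hr H
    rw [coeff_psComp]
    apply Finset.sum_subset
    · exact Finset.range_subset_range.mpr (by omega)
    · intro j hj hjn
      rw [coeff_pow_f_eq_zero f W hfW (by
        simp only [Finset.mem_range] at hj hjn; omega), mul_zero]
  rw [PowerSeries.coeff_mul, coeff_psComp]
  calc ∑ j ∈ range (m + 1), coeff j (H1 * H2) * coeff m (f ^ j)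
      = ∑ j ∈ range (m + 1), ∑ p ∈ Finset.HasAntidiagonal.antidiagonal j,
          coeff p.1 H1 * coeff p.2 H2 * coeff m (f ^ (p.1 + p.2)) := by
        refine Finset.sum_congr rfl fun j hj => ?_
        rw [PowerSeries.coeff_mul, Finset.sum_mul]
        refine Finset.sum_congr rfl fun p hp => ?_
        rw [Finset.HasAntidiagonal.mem_antidiagonal.mp hp]
    _ = ∑ p ∈ range (m + 1) ×ˢ range (m + 1),
          coeff p.1 H1 * coeff p.2 H2 * coeff m (f ^ (p.1 + p.2)) := by
        apply sum_triangle
        intro p hp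
        rw [coeff_pow_f_eq_zero f W hfW hp, mul_zero]
    _ = ∑ a ∈ range (m + 1), ∑ b ∈ range (m + 1),
          coeff a H1 * coeff b H2 * coeff m (f ^ (a + b)) := by
        rw [Finset.sum_product]
    _ = ∑ p ∈ Finset.HasAntidiagonal.antidiagonal m, coeff p.1 (psComp H1 f) * coeff p.2 (psComp H2 f) := by
        symm
        calc ∑ p ∈ Finset.HasAntidiagonal.antidiagonal m, coeff p.1 (psComp H1 f) * coeff p.2 (psComp H2 f)
            = ∑ p ∈ Finset.HasAntidiagonal.antidiagonal m, ∑ a ∈ range (m + 1), ∑ b ∈ range (m + 1),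
                coeff a H1 * coeff p.1 (f ^ a) * (coeff b H2 * coeff p.2 (f ^ b)) := by
              refine Finset.sum_congr rfl fun p hp => ?_
              have hmem := Finset.HasAntidiagonal.mem_antidiagonal.mp hp
              rw [hext p.1 (by omega) H1, hext p.2 (by omega) H2, Finset.sum_mul_sum]
          _ = ∑ a ∈ range (m + 1), ∑ b ∈ range (m + 1), ∑ p ∈ Finset.HasAntidiagonal.antidiagonal m,
                coeff a H1 * coeff p.1 (f ^ a) * (coeff b H2 * coeff p.2 (f ^ b)) := by
              rw [Finset.sum_comm]
              exact Finset.sum_congr rfl fun a _ => Finset.sum_comm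
          _ = ∑ a ∈ range (m + 1), ∑ b ∈ range (m + 1),
                coeff a H1 * coeff b H2 * coeff m (f ^ (a + b)) := by
              refine Finset.sum_congr rfl fun a _ => Finset.sum_congr rfl fun b _ => ?_
              rw [pow_add, PowerSeries.coeff_mul, Finset.mul_sum]
              exact Finset.sum_congr rfl fun p _ => by ring

lemma psComp_one (f : PowerSeries R) :
    psComp (1 : PowerSeries R) f = 1 := by
  ext r
  rw [coeff_psComp, Finset.sum_eq_single 0]
  · simp
  · intro j hj hj0
    simp [PowerSeries.coeff_one, hj0]
  · simp

lemma psComp_pow (f W G : PowerSeries R) (hfW : f = PowerSeries.X * W) (k : ℕ) :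
    psComp (G ^ k) f = (psComp G f) ^ k := by
  induction k with
  | zero => simpa using psComp_one f
  | succ k ih => rw [pow_succ, psComp_mul f W hfW, ih, pow_succ]

lemma main [Algebra ℚ R] (G f : PowerSeries R) (hfG : f = PowerSeries.X * psComp G f) :
    ∀ m k : ℕ, 1 ≤ k →
      ((m + k : ℕ) : R) * coeff (m + k) (f ^ k) = (k : R) * coeff m (G ^ (m + k)) := by
  intro m
  induction m using Nat.strong_induction_on with
  | _ m IH =>
  intro k hk
  set W := psComp G f with hW
  have step0 : coeff (m + k) (f ^ k) = coeff m (W ^ k) :=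
    coeff_pow_f_shift f W hfG m k
  have step1 : coeff m (W ^ k) = ∑ j ∈ range (m + 1), coeff j (G ^ k) * coeff m (f ^ j) := by
    rw [← psComp_pow f W G hfG, coeff_psComp]
  rcases Nat.eq_zero_or_pos m with hm | hm
  · subst hm
    rw [step0, step1]
    simp
  -- m ≥ 1
  have key : (m : R) * coeff m (W ^ k)
      = ∑ i ∈ range m, coeff (i + 1) (G ^ k) * (((i + 1 : ℕ) : R) * coeff (m - (i + 1)) (G ^ m)) := by
    rw [step1, Finset.mul_sum, Finset.sum_range_succ']
    have h0 : (m : R) * (coeff 0 (G ^ k) * coeff m (f ^ 0)) = 0 := by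
      rw [pow_zero, PowerSeries.coeff_one, if_neg (by omega)]
      ring
    rw [h0, add_zero]
    refine Finset.sum_congr rfl fun i hi => ?_
    have hi' : i + 1 ≤ m := by have := Finset.mem_range.mp hi; omega
    have hIH := IH (m - (i + 1)) (by omega) (i + 1) (by omega)
    rw [show m - (i + 1) + (i + 1) = m by omega] at hIH
    calc (m : R) * (coeff (i + 1) (G ^ k) * coeff m (f ^ (i + 1)))
        = coeff (i + 1) (G ^ k) * ((m : R) * coeff m (f ^ (i + 1))) := by ring
      _ = coeff (i + 1) (G ^ k) * (((i + 1 : ℕ) : R) * coeff (m - (i + 1)) (G ^ m)) := by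
          rw [hIH]
  have hD : ((m + k : ℕ)) • (PowerSeries.derivative R (G ^ k) * G ^ m)
      = k • (PowerSeries.derivative R (G ^ (m + k))) := by
    rw [Derivation.leibniz_pow, Derivation.leibniz_pow]
    simp only [smul_eq_mul, nsmul_eq_mul]
    rw [show m + k - 1 = (k - 1) + m by omega, pow_add]
    ring
  have hT : coeff (m - 1) (PowerSeries.derivative R (G ^ k) * G ^ m)
      = ∑ i ∈ range m, coeff (i + 1) (G ^ k) * (((i + 1 : ℕ) : R) * coeff (m - (i + 1)) (G ^ m)) := by
    rw [PowerSeries.coeff_mul,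
      Finset.Nat.sum_antidiagonal_eq_sum_range_succ
        (fun a b => coeff a (PowerSeries.derivative R (G ^ k)) * coeff b (G ^ m)) (m - 1)]
    rw [show (m - 1).succ = m by omega]
    refine Finset.sum_congr rfl fun i hi => ?_
    rw [PowerSeries.coeff_derivative, show m - 1 - i = m - (i + 1) by omega]
    push_cast
    ring
  have hDc : ((m + k : ℕ) : R) * coeff (m - 1) (PowerSeries.derivative R (G ^ k) * G ^ m)
      = (k : R) * ((m : R) * coeff m (G ^ (m + k))) := by
    have := congrArg (coeff (m - 1)) hD
    rw [map_nsmul, map_nsmul, nsmul_eq_mul, nsmul_eq_mul] at this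
    rw [this, PowerSeries.coeff_derivative, show m - 1 + 1 = m by omega,
      Nat.cast_sub hm, Nat.cast_one]
    push_cast
    ring
  have hmain : (m : R) * (((m + k : ℕ) : R) * coeff (m + k) (f ^ k))
      = (m : R) * ((k : R) * coeff m (G ^ (m + k))) := by
    calc (m : R) * (((m + k : ℕ) : R) * coeff (m + k) (f ^ k))
        = ((m + k : ℕ) : R) * ((m : R) * coeff m (W ^ k)) := by rw [step0]; ring
      _ = ((m + k : ℕ) : R) * coeff (m - 1) (PowerSeries.derivative R (G ^ k) * G ^ m) := by
          rw [key, hT]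
      _ = (k : R) * ((m : R) * coeff m (G ^ (m + k))) := hDc
      _ = (m : R) * ((k : R) * coeff m (G ^ (m + k))) := by ring
  have hminv : (algebraMap ℚ R ((m : ℚ)⁻¹)) * (m : R) = 1 := by
    rw [← map_natCast (algebraMap ℚ R) m, ← map_mul,
      inv_mul_cancel₀ (Nat.cast_ne_zero.mpr (by omega)), map_one]
  calc ((m + k : ℕ) : R) * coeff (m + k) (f ^ k)
      = (algebraMap ℚ R ((m : ℚ)⁻¹) * (m : R)) * (((m + k : ℕ) : R) * coeff (m + k) (f ^ k)) := by
        rw [hminv, one_mul]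
    _ = algebraMap ℚ R ((m : ℚ)⁻¹) * ((m : R) * (((m + k : ℕ) : R) * coeff (m + k) (f ^ k))) := by
        ring
    _ = algebraMap ℚ R ((m : ℚ)⁻¹) * ((m : R) * ((k : R) * coeff m (G ^ (m + k)))) := by
        rw [hmain]
    _ = (algebraMap ℚ R ((m : ℚ)⁻¹) * (m : R)) * ((k : R) * coeff m (G ^ (m + k))) := by
        ring
    _ = (k : R) * coeff m (G ^ (m + k)) := by rw [hminv, one_mul]

end LagrangeAux

/-- **Lagrange inversion formula.** If `G` is a formal power series over a commutative
`ℚ`-algebra and `f` is a formal power series with zero constant term satisfying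
`f(x) = x·G(f(x))`, then for all integers `n ≥ k ≥ 1`,
`n·[x^n] f(x)^k = k·[x^{n−k}] G(x)^n`. -/
theorem lagrange_inversion (R : Type) [CommRing R] [Algebra ℚ R]
    (G f : PowerSeries R) (hf0 : PowerSeries.constantCoeff f = 0)
    (hfG : f = PowerSeries.X * psComp G f) :
    ∀ n k : ℕ, 1 ≤ k → k ≤ n →
      (n : R) * PowerSeries.coeff n (f ^ k) =
        (k : R) * PowerSeries.coeff (n - k) (G ^ n) := by
  intro n k hk hkn
  have h := LagrangeAux.main G f hfG (n - k) k hk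
  rwa [Nat.sub_add_cancel hkn] at h

end
end

section
/- Fix an integer k ≥ 1 and c > 40, let p = c/n, and let H be an (n,k,p) Newman–Watts small world. Then for all n sufficiently large, P(there exists S ⊆ [n] with |S| > 9n/10 and e(S) ≤ |E(H)|) ≤ (2/e)^n. -/
open scoped Classical

noncomputable section

variable {V : Type*} [Fintype V] [DecidableEq V]

namespace NWAux
open Finset
open Fin.NatCast

/-- pairs `(x,y)` with `x<y`, both in `Sᶜ` -/
def AAf (n : ℕ) (S : Finset (Fin n)) : Finset (Fin n × Fin n) :=
  (Sᶜ ×ˢ Sᶜ).filter fun q => q.1 < q.2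

/-- pairs `(x,y)` with `x<y`, both in `S`, not ring-adjacent -/
def BBf (n k : ℕ) (S : Finset (Fin n)) : Finset (Fin n × Fin n) :=
  (S ×ˢ S).filter fun q => q.1 < q.2 ∧ ¬((q.2 - q.1).val ≤ k ∨ (q.1 - q.2).val ≤ k)

def AAs (n : ℕ) (S : Finset (Fin n)) : Finset (Sym2 (Fin n)) :=
  (AAf n S).image fun q => s(q.1, q.2)

def BBs (n k : ℕ) (S : Finset (Fin n)) : Finset (Sym2 (Fin n)) :=
  (BBf n k S).image fun q => s(q.1, q.2)

def Acnt (n : ℕ) (S : Finset (Fin n)) (η : Sym2 (Fin n) → Bool) : ℕ :=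
  ((AAs n S).filter fun e => η e = true).card

def Bcnt (n k : ℕ) (S : Finset (Fin n)) (η : Sym2 (Fin n) → Bool) : ℕ :=
  ((BBs n k S).filter fun e => η e = true).card

lemma mk_injOn_lt {n : ℕ} (P : Finset (Fin n × Fin n)) (hP : ∀ q ∈ P, q.1 < q.2) :
    ∀ x ∈ P, ∀ y ∈ P, s(x.1, x.2) = s(y.1, y.2) → x = y := by
  intro x hx y hy h
  rcases Sym2.mk_eq_mk_iff.1 h with h' | h'
  · have h1 : x.1 = y.1 := congrArg Prod.fst h'
    have h2 : x.2 = y.2 := congrArg Prod.snd h'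
    exact Prod.ext h1 h2
  · have h1 : x.1 = y.2 := congrArg Prod.fst h'
    have h2 : x.2 = y.1 := congrArg Prod.snd h'
    have := hP x hx
    have := hP y hy
    exfalso
    exact absurd (h1 ▸ h2 ▸ hP x hx) (lt_asymm (hP y hy))

lemma card_shift_le {n k : ℕ} [NeZero n] (x : Fin n) (f : Fin n → Fin n)
    (hf : Function.Injective f) (hfx : ∀ y, y ≠ x → f y ≠ 0) :
    (univ.filter fun y => y ≠ x ∧ (f y).val ≤ k).card ≤ k := by
  refine le_trans (Finset.card_le_card_of_injOn (t := Finset.Icc 1 k)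
    (fun y => (f y).val) ?_ ?_) (by simp [Nat.card_Icc])
  · intro y hy
    simp only [Finset.coe_filter, Set.mem_setOf_eq, mem_filter, mem_univ, true_and] at hy
    have h0 : f y ≠ 0 := hfx y hy.1
    have : (f y).val ≠ 0 := fun h => h0 (Fin.ext h)
    simp only [Finset.coe_Icc, Set.mem_Icc]; omega
  · intro a _ b _ hab
    exact hf (Fin.ext hab)

lemma ringdeg_le (n k : ℕ) [NeZero n] (x : Fin n) :
    (univ.filter fun y => ringAdj n k x y).card ≤ 2 * k := by
  have hsub : (univ.filter fun y => ringAdj n k x y) ⊆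
      (univ.filter fun y => y ≠ x ∧ (y - x).val ≤ k) ∪
      (univ.filter fun y => y ≠ x ∧ (x - y).val ≤ k) := by
    intro y hy
    simp only [mem_filter, mem_univ, true_and, mem_union] at hy ⊢
    rcases hy with ⟨hne, h | h⟩
    · exact Or.inl ⟨hne.symm, h⟩
    · exact Or.inr ⟨hne.symm, h⟩
  calc (univ.filter fun y => ringAdj n k x y).card
      ≤ _ := Finset.card_le_card hsub
    _ ≤ _ + _ := Finset.card_union_le _ _
    _ ≤ k + k := by
        gcongr
        · exact card_shift_le x (fun y => y - x) sub_left_injective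
            (fun y hy => sub_ne_zero.2 hy)
        · exact card_shift_le x (fun y => x - y) sub_right_injective
            (fun y hy => sub_ne_zero.2 hy.symm)
    _ = 2 * k := by omega

lemma ring_fwd {n k : ℕ} [NeZero n] (hn : 2 * k + 1 ≤ n) (x : Fin n) (S : Finset (Fin n)) :
    ((Finset.Icc 1 k).filter (fun j : ℕ => x + (j : Fin n) ∈ S)).card ≤
      (S.filter fun y => ringAdj n k x y).card := by
  apply Finset.card_le_card_of_injOn (fun j : ℕ => x + (j : Fin n))
  · intro j hj
    simp only [Finset.coe_filter, Set.mem_setOf_eq, mem_filter, Finset.mem_Icc] at hj ⊢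
    obtain ⟨⟨hj1, hjk⟩, hmem⟩ := hj
    have hjn : j < n := by omega
    have hval : ((j : Fin n)).val = j := Fin.val_cast_of_lt hjn
    have hne : x ≠ x + (j : Fin n) := by
      intro h
      have h0 : (j : Fin n) = 0 := left_eq_add.1 h
      rw [h0] at hval
      simp only [Fin.val_zero] at hval
      omega
    refine ⟨hmem, hne, Or.inl ?_⟩
    rw [add_sub_cancel_left, hval]; exact hjk
  · intro a ha b hb hab
    simp only [coe_filter, Set.mem_setOf_eq, Finset.mem_Icc] at ha hb
    have h1 : (a : Fin n) = (b : Fin n) := add_left_cancel hab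
    have ha' : a < n := by omega
    have hb' : b < n := by omega
    have h2 := congrArg Fin.val h1
    rwa [Fin.val_cast_of_lt ha', Fin.val_cast_of_lt hb'] at h2

lemma count_shift {n : ℕ} [NeZero n] (c : Fin n) (S : Finset (Fin n)) :
    ∑ x : Fin n, (if x + c ∈ S then (1:ℕ) else 0) = S.card := by
  have h := Fintype.sum_equiv (Equiv.addRight c)
    (fun x => if x + c ∈ S then (1:ℕ) else 0)
    (fun y => if y ∈ S then (1:ℕ) else 0) (fun x => by simp only [Equiv.coe_addRight]; congr)
  rw [h]
  simp [Finset.sum_ite_mem]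

lemma ordRing_S_lb {n k : ℕ} [NeZero n] (hn : 2 * k + 1 ≤ n) (S : Finset (Fin n)) :
    k * S.card ≤ (∑ x ∈ S, (S.filter fun y => ringAdj n k x y).card) + k * Sᶜ.card := by
  have h2 : ∑ x : Fin n, ((Finset.Icc 1 k).filter (fun j : ℕ => x + (j : Fin n) ∈ S)).card
      = k * S.card := by
    calc ∑ x : Fin n, ((Finset.Icc 1 k).filter (fun j : ℕ => x + (j : Fin n) ∈ S)).card
        = ∑ x : Fin n, ∑ j ∈ Finset.Icc 1 k, (if x + (j : Fin n) ∈ S then 1 else 0) := by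
          refine Finset.sum_congr rfl fun x _ => ?_
          rw [Finset.card_filter]
      _ = ∑ j ∈ Finset.Icc 1 k, ∑ x : Fin n, (if x + (j : Fin n) ∈ S then 1 else 0) :=
          Finset.sum_comm
      _ = ∑ _j ∈ Finset.Icc 1 k, S.card :=
          Finset.sum_congr rfl fun j _ => count_shift _ S
      _ = k * S.card := by
          rw [Finset.sum_const, Nat.card_Icc, smul_eq_mul]; congr 1
  have h3 : ∑ x ∈ Sᶜ, ((Finset.Icc 1 k).filter (fun j : ℕ => x + (j : Fin n) ∈ S)).card
      ≤ k * Sᶜ.card := by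
    calc ∑ x ∈ Sᶜ, ((Finset.Icc 1 k).filter (fun j : ℕ => x + (j : Fin n) ∈ S)).card
        ≤ ∑ _x ∈ Sᶜ, k := Finset.sum_le_sum fun x _ => by
          simpa [Nat.card_Icc] using Finset.card_filter_le (Finset.Icc 1 k)
            (fun j : ℕ => x + (j : Fin n) ∈ S)
      _ = k * Sᶜ.card := by rw [Finset.sum_const, smul_eq_mul, mul_comm]
  have h4 := Finset.sum_add_sum_compl S
    (fun x => ((Finset.Icc 1 k).filter (fun j : ℕ => x + (j : Fin n) ∈ S)).card)
  have h5 : ∑ x ∈ S, ((Finset.Icc 1 k).filter (fun j : ℕ => x + (j : Fin n) ∈ S)).card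
      ≤ ∑ x ∈ S, (S.filter fun y => ringAdj n k x y).card :=
    Finset.sum_le_sum fun x _ => ring_fwd hn x S
  omega


lemma adj_iff {n k : ℕ} (η : Sym2 (Fin n) → Bool) (x y : Fin n) :
    (nwGraph n k η).Adj x y ↔
      (x ≠ y ∧ ((y - x).val ≤ k ∨ (x - y).val ≤ k ∨ η s(x, y) = true)) := Iff.rfl

lemma adj_split_lower {n k : ℕ} (η : Sym2 (Fin n) → Bool) (x y : Fin n) :
    (if ringAdj n k x y then (1:ℕ) else 0)
      + (if (x ≠ y ∧ ¬((y - x).val ≤ k ∨ (x - y).val ≤ k) ∧ η s(x, y) = true) then (1:ℕ) else 0)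
      ≤ (if (nwGraph n k η).Adj x y then (1:ℕ) else 0) := by
  rw [if_congr (adj_iff η x y) rfl rfl]
  unfold ringAdj
  split_ifs <;> first | omega | (exfalso; tauto)

lemma adj_split_upper {n k : ℕ} (η : Sym2 (Fin n) → Bool) (x y : Fin n) :
    (if (nwGraph n k η).Adj x y then (1:ℕ) else 0)
      ≤ (if ringAdj n k x y then (1:ℕ) else 0)
      + (if (x ≠ y ∧ η s(x, y) = true) then (1:ℕ) else 0) := by
  rw [if_congr (adj_iff η x y) rfl rfl]
  unfold ringAdj
  split_ifs <;> first | omega | (exfalso; tauto)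

lemma core_det {n k : ℕ} (hk : 1 ≤ k) (hn : 2 * k + 1 ≤ n) (S : Finset (Fin n))
    (hS : 10 * Sᶜ.card ≤ n) (η : Sym2 (Fin n) → Bool)
    (hev : eTot (nwGraph n k η) S ≤ edgeCount (nwGraph n k η)) :
    Bcnt n k S η ≤ 2 * Acnt n S η := by
  haveI : NeZero n := ⟨by omega⟩
  set G := nwGraph n k η with hG
  -- decompose degrees
  have hdeg : ∀ x, gdeg G x = (∑ y ∈ S, if G.Adj x y then (1:ℕ) else 0)
      + (∑ y ∈ Sᶜ, if G.Adj x y then (1:ℕ) else 0) := by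
    intro x
    rw [gdeg, Finset.card_filter, ← Finset.sum_add_sum_compl S]
  -- step 1: sum of degrees over S at most over complement
  have h1 : ∑ x ∈ S, gdeg G x ≤ ∑ x ∈ Sᶜ, gdeg G x := by
    have e3 := Finset.sum_add_sum_compl S (gdeg G)
    rw [eTot, edgeCount] at hev
    omega
  -- step 2: cross terms agree
  have hcross : (∑ x ∈ S, ∑ y ∈ Sᶜ, if G.Adj x y then (1:ℕ) else 0)
      = ∑ x ∈ Sᶜ, ∑ y ∈ S, if G.Adj x y then (1:ℕ) else 0 := by
    rw [Finset.sum_comm]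
    exact Finset.sum_congr rfl fun x _ => Finset.sum_congr rfl fun y _ =>
      if_congr (G.adj_comm y x) rfl rfl
  have hordle : (∑ x ∈ S, ∑ y ∈ S, if G.Adj x y then (1:ℕ) else 0)
      ≤ ∑ x ∈ Sᶜ, ∑ y ∈ Sᶜ, if G.Adj x y then (1:ℕ) else 0 := by
    have l1 : ∑ x ∈ S, gdeg G x = (∑ x ∈ S, ∑ y ∈ S, if G.Adj x y then (1:ℕ) else 0)
        + ∑ x ∈ S, ∑ y ∈ Sᶜ, (if G.Adj x y then (1:ℕ) else 0) := by
      rw [← Finset.sum_add_distrib]; exact Finset.sum_congr rfl fun x _ => hdeg x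
    have l2 : ∑ x ∈ Sᶜ, gdeg G x = (∑ x ∈ Sᶜ, ∑ y ∈ S, if G.Adj x y then (1:ℕ) else 0)
        + ∑ x ∈ Sᶜ, ∑ y ∈ Sᶜ, (if G.Adj x y then (1:ℕ) else 0) := by
      rw [← Finset.sum_add_distrib]; exact Finset.sum_congr rfl fun x _ => hdeg x
    omega
  -- ring and eta parts
  set rS := ∑ x ∈ S, ∑ y ∈ S, (if ringAdj n k x y then (1:ℕ) else 0) with hrS
  set rT := ∑ x ∈ Sᶜ, ∑ y ∈ Sᶜ, (if ringAdj n k x y then (1:ℕ) else 0) with hrT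
  set nS := ∑ x ∈ S, ∑ y ∈ S,
    (if (x ≠ y ∧ ¬((y - x).val ≤ k ∨ (x - y).val ≤ k) ∧ η s(x, y) = true) then (1:ℕ) else 0) with hnS
  set eT := ∑ x ∈ Sᶜ, ∑ y ∈ Sᶜ, (if (x ≠ y ∧ η s(x, y) = true) then (1:ℕ) else 0) with heT
  have hlow : rS + nS ≤ ∑ x ∈ S, ∑ y ∈ S, if G.Adj x y then (1:ℕ) else 0 := by
    rw [hrS, hnS, ← Finset.sum_add_distrib]
    refine Finset.sum_le_sum fun x _ => ?_
    rw [← Finset.sum_add_distrib]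
    exact Finset.sum_le_sum fun y _ => adj_split_lower η x y
  have hupp : (∑ x ∈ Sᶜ, ∑ y ∈ Sᶜ, if G.Adj x y then (1:ℕ) else 0) ≤ rT + eT := by
    rw [hrT, heT, ← Finset.sum_add_distrib]
    refine Finset.sum_le_sum fun x _ => ?_
    rw [← Finset.sum_add_distrib]
    exact Finset.sum_le_sum fun y _ => adj_split_upper η x y
  -- ring bounds
  have hrT2 : rT ≤ 2 * (k * Sᶜ.card) := by
    rw [hrT]
    calc ∑ x ∈ Sᶜ, ∑ y ∈ Sᶜ, (if ringAdj n k x y then (1:ℕ) else 0)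
        ≤ ∑ x ∈ Sᶜ, ∑ y : Fin n, (if ringAdj n k x y then (1:ℕ) else 0) :=
          Finset.sum_le_sum fun x _ => Finset.sum_le_sum_of_subset (Finset.subset_univ _)
      _ ≤ ∑ _x ∈ Sᶜ, 2 * k := Finset.sum_le_sum fun x _ => by
          rw [← Finset.card_filter]; exact ringdeg_le n k x
      _ = 2 * (k * Sᶜ.card) := by rw [Finset.sum_const, smul_eq_mul]; ring
  have hrS2 : k * S.card ≤ rS + k * Sᶜ.card := by
    have := ordRing_S_lb (k := k) hn S
    rw [hrS]
    have heq : ∑ x ∈ S, (S.filter fun y => ringAdj n k x y).card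
        = ∑ x ∈ S, ∑ y ∈ S, (if ringAdj n k x y then (1:ℕ) else 0) :=
      Finset.sum_congr rfl fun x _ => Finset.card_filter _ _
    omega
  have hcards : S.card + Sᶜ.card = n := by
    rw [Finset.card_add_card_compl, Fintype.card_fin]
  have h9 : 9 * Sᶜ.card ≤ S.card := by omega
  have h9k : 9 * (k * Sᶜ.card) ≤ k * S.card := by
    calc 9 * (k * Sᶜ.card) = k * (9 * Sᶜ.card) := by ring
      _ ≤ k * S.card := Nat.mul_le_mul_left k h9
  -- so ring pairs in T at most ring pairs in S
  have hrTrS : rT ≤ rS := by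
    have hkb := h9k
    have := hrS2
    -- 9 kb ≤ ka ≤ rS + kb  ⇒ 8 kb ≤ rS; rT ≤ 2 kb ≤ rS
    set kb := k * Sᶜ.card
    set ka := k * S.card
    omega
  have hkey : nS ≤ eT := by omega
  -- relate Bcnt to nS
  have hBfin : Bcnt n k S η ≤ nS := by
    rw [Bcnt, Finset.card_filter, BBs,
      Finset.sum_image (mk_injOn_lt (BBf n k S) (fun q hq => (Finset.mem_filter.1 hq).2.1))]
    rw [hnS, ← Finset.sum_product']
    calc ∑ q ∈ BBf n k S, (if η s(q.1, q.2) = true then (1:ℕ) else 0)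
        ≤ ∑ q ∈ BBf n k S,
          (if (q.1 ≠ q.2 ∧ ¬((q.2 - q.1).val ≤ k ∨ (q.1 - q.2).val ≤ k) ∧ η s(q.1, q.2) = true)
            then (1:ℕ) else 0) := by
          refine Finset.sum_le_sum fun q hq => ?_
          obtain ⟨-, hlt, hnr⟩ := Finset.mem_filter.1 hq
          by_cases hη : η s(q.1, q.2) = true
          · rw [if_pos hη, if_pos ⟨ne_of_lt hlt, hnr, hη⟩]
          · rw [if_neg hη]; omega
      _ ≤ ∑ q ∈ S ×ˢ S,
          (if (q.1 ≠ q.2 ∧ ¬((q.2 - q.1).val ≤ k ∨ (q.1 - q.2).val ≤ k) ∧ η s(q.1, q.2) = true)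
            then (1:ℕ) else 0) :=
          Finset.sum_le_sum_of_subset (Finset.filter_subset _ _)
  -- relate eT to Acnt
  have hAfin : eT ≤ 2 * Acnt n S η := by
    have hAeq : Acnt n S η = ∑ q ∈ AAf n S, (if η s(q.1, q.2) = true then (1:ℕ) else 0) := by
      rw [Acnt, Finset.card_filter, AAs,
        Finset.sum_image (mk_injOn_lt (AAf n S) (fun q hq => (Finset.mem_filter.1 hq).2))]
    set f : Fin n × Fin n → ℕ := fun q => if (q.1 ≠ q.2 ∧ η s(q.1, q.2) = true) then 1 else 0 with hf
    have heT2 : eT = ∑ q ∈ Sᶜ ×ˢ Sᶜ, f q := by rw [heT, ← Finset.sum_product']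
    have hsplit := Finset.sum_filter_add_sum_filter_not (Sᶜ ×ˢ Sᶜ) (fun q => q.1 < q.2) f
    have hgt : ∑ q ∈ (Sᶜ ×ˢ Sᶜ).filter (fun q => ¬ q.1 < q.2), f q
        = ∑ q ∈ (Sᶜ ×ˢ Sᶜ).filter (fun q => q.2 < q.1), f q := by
      refine (Finset.sum_subset ?_ ?_).symm
      · intro q hq
        obtain ⟨hqm, hqlt⟩ := Finset.mem_filter.1 hq
        exact Finset.mem_filter.2 ⟨hqm, not_lt_of_gt hqlt⟩
      · intro q hq hq2
        obtain ⟨hqm, hqnlt⟩ := Finset.mem_filter.1 hq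
        have : q.1 = q.2 := by
          by_contra hne
          rcases lt_or_gt_of_ne hne with h | h
          · exact hqnlt h
          · exact hq2 (Finset.mem_filter.2 ⟨hqm, h⟩)
        simp only [hf]
        simp [this]
    have hswap : ∑ q ∈ (Sᶜ ×ˢ Sᶜ).filter (fun q => q.2 < q.1), f q
        = ∑ q ∈ (Sᶜ ×ˢ Sᶜ).filter (fun q => q.1 < q.2), f q := by
      refine Finset.sum_nbij' (fun q => Prod.swap q) (fun q => Prod.swap q) ?_ ?_ ?_ ?_ ?_
      · intro q hq
        obtain ⟨hqm, hqlt⟩ := Finset.mem_filter.1 hq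
        obtain ⟨hm1, hm2⟩ := Finset.mem_product.1 hqm
        exact Finset.mem_filter.2 ⟨Finset.mem_product.2 ⟨hm2, hm1⟩, hqlt⟩
      · intro q hq
        obtain ⟨hqm, hqlt⟩ := Finset.mem_filter.1 hq
        obtain ⟨hm1, hm2⟩ := Finset.mem_product.1 hqm
        exact Finset.mem_filter.2 ⟨Finset.mem_product.2 ⟨hm2, hm1⟩, hqlt⟩
      · intro q _; exact Prod.swap_swap q
      · intro q _; exact Prod.swap_swap q
      · intro q _
        simp only [hf]
        refine if_congr (and_congr ne_comm ?_) rfl rfl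
        rw [Sym2.eq_swap]
        rfl
    have hle1 : ∑ q ∈ (Sᶜ ×ˢ Sᶜ).filter (fun q => q.1 < q.2), f q
        ≤ Acnt n S η := by
      rw [hAeq]
      refine Finset.sum_le_sum fun q hq => ?_
      simp only [hf]
      split_ifs <;> first | omega | (exfalso; tauto)
    have : AAf n S = (Sᶜ ×ˢ Sᶜ).filter (fun q => q.1 < q.2) := rfl
    omega
  omega


lemma AAs_card_le {n : ℕ} (S : Finset (Fin n)) :
    (AAs n S).card ≤ Sᶜ.card * Sᶜ.card :=
  (Finset.card_image_le).trans ((Finset.card_le_card (Finset.filter_subset _ _)).trans_eq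
    (Finset.card_product _ _))

lemma ring_pairs_le {n k : ℕ} [NeZero n] :
    ((Finset.univ ×ˢ Finset.univ : Finset (Fin n × Fin n)).filter
      (fun q => ringAdj n k q.1 q.2)).card ≤ 2 * (k * n) := by
  rw [Finset.card_filter, Finset.sum_product]
  calc ∑ x : Fin n, ∑ y : Fin n, (if ringAdj n k x y then (1:ℕ) else 0)
      ≤ ∑ _x : Fin n, 2 * k := Finset.sum_le_sum fun x _ => by
        rw [← Finset.card_filter]; exact ringdeg_le n k x
    _ = 2 * (k * n) := by
        rw [Finset.sum_const, Finset.card_univ, Fintype.card_fin, smul_eq_mul]; ring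

lemma BBs_card_lb {n k : ℕ} [NeZero n] (S : Finset (Fin n)) :
    S.card * S.card ≤ 2 * (BBs n k S).card + 4 * (k * n) + S.card := by
  classical
  set D := S ×ˢ S with hD
  have hBB : (BBs n k S).card = (BBf n k S).card := by
    rw [BBs]
    exact Finset.card_image_of_injOn (fun a ha b hb h =>
      mk_injOn_lt (BBf n k S) (fun q hq => (Finset.mem_filter.1 hq).2.1) a ha b hb h)
  have h1 := Finset.card_filter_add_card_filter_not
    (s := D) (p := fun q => q.1 < q.2)
  have h2 := Finset.card_filter_add_card_filter_not
    (s := D.filter (fun q => ¬ q.1 < q.2)) (p := fun q => q.2 < q.1)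
  have h3 : (D.filter (fun q => ¬ q.1 < q.2)).filter (fun q => q.2 < q.1)
      = D.filter (fun q => q.2 < q.1) := by
    rw [Finset.filter_filter]
    exact Finset.filter_congr fun q _ =>
      ⟨fun h => h.2, fun h => ⟨lt_asymm h, h⟩⟩
  have h4 : ((D.filter (fun q => ¬ q.1 < q.2)).filter (fun q => ¬ q.2 < q.1)).card
      = S.card := by
    apply Finset.card_bij (fun q _ => q.1)
    · intro q hq
      have := (Finset.mem_product.1 (Finset.mem_filter.1 (Finset.mem_filter.1 hq).1).1).1
      exact this
    · intro q hq q' hq' h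
      obtain ⟨hq1, hq2⟩ := Finset.mem_filter.1 hq
      obtain ⟨hq1', hq2'⟩ := Finset.mem_filter.1 hq'
      have e1 : q.1 = q.2 := le_antisymm (not_lt.1 hq2) (not_lt.1 (Finset.mem_filter.1 hq1).2)
      have e2 : q'.1 = q'.2 := le_antisymm (not_lt.1 hq2') (not_lt.1 (Finset.mem_filter.1 hq1').2)
      exact Prod.ext h (by rw [← e1, ← e2, h])
    · intro x hx
      exact ⟨(x, x), Finset.mem_filter.2 ⟨Finset.mem_filter.2
        ⟨Finset.mem_product.2 ⟨hx, hx⟩, lt_irrefl x⟩, lt_irrefl x⟩, rfl⟩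
  have h5 : (D.filter (fun q => q.2 < q.1)).card = (D.filter (fun q => q.1 < q.2)).card := by
    apply Finset.card_bij' (fun q _ => Prod.swap q) (fun q _ => Prod.swap q)
    · intro q hq
      obtain ⟨hqm, hqlt⟩ := Finset.mem_filter.1 hq
      obtain ⟨hm1, hm2⟩ := Finset.mem_product.1 hqm
      exact Finset.mem_filter.2 ⟨Finset.mem_product.2 ⟨hm2, hm1⟩, hqlt⟩
    · intro q hq
      obtain ⟨hqm, hqlt⟩ := Finset.mem_filter.1 hq
      obtain ⟨hm1, hm2⟩ := Finset.mem_product.1 hqm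
      exact Finset.mem_filter.2 ⟨Finset.mem_product.2 ⟨hm2, hm1⟩, hqlt⟩
    · intro q _; exact Prod.swap_swap q
    · intro q _; exact Prod.swap_swap q
  have h6 : (D.filter (fun q => q.1 < q.2)).card ≤ (BBf n k S).card +
      (D.filter (fun q => q.1 < q.2 ∧ ((q.2 - q.1).val ≤ k ∨ (q.1 - q.2).val ≤ k))).card := by
    refine le_trans (Finset.card_le_card ?_) (Finset.card_union_le _ _)
    intro q hq
    obtain ⟨hqm, hqlt⟩ := Finset.mem_filter.1 hq
    rw [Finset.mem_union]
    by_cases hC : (q.2 - q.1).val ≤ k ∨ (q.1 - q.2).val ≤ k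
    · exact Or.inr (Finset.mem_filter.2 ⟨hqm, hqlt, hC⟩)
    · exact Or.inl (Finset.mem_filter.2 ⟨hqm, hqlt, hC⟩)
  have h7 : (D.filter (fun q => q.1 < q.2 ∧ ((q.2 - q.1).val ≤ k ∨ (q.1 - q.2).val ≤ k))).card
      ≤ 2 * (k * n) := by
    refine le_trans (Finset.card_le_card ?_) (ring_pairs_le (k := k))
    intro q hq
    obtain ⟨-, hqlt, hC⟩ := Finset.mem_filter.1 hq
    exact Finset.mem_filter.2 ⟨Finset.mem_product.2 ⟨Finset.mem_univ _, Finset.mem_univ _⟩,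
      ne_of_lt hqlt, hC⟩
  have hDcard : D.card = S.card * S.card := Finset.card_product _ _
  rw [h3] at h2
  omega

lemma weight_nonneg (n : ℕ) {p : ℝ} (h0 : 0 ≤ p) (h1 : p ≤ 1) (η : Sym2 (Fin n) → Bool) :
    0 ≤ nwWeight n p η :=
  Finset.prod_nonneg fun e _ => by split_ifs <;> linarith

lemma sum_prod_bool {I : Type*} [Fintype I] [DecidableEq I] (h : I → Bool → ℝ) :
    (∑ η : I → Bool, ∏ e, h e (η e)) = ∏ e, (h e true + h e false) := by
  have h2 := Finset.prod_univ_sum (fun _ : I => (Finset.univ : Finset Bool)) (fun e b => h e b)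
  rw [Fintype.piFinset_univ] at h2
  rw [show (∏ e, (h e true + h e false)) = ∏ e : I, ∑ b ∈ (Finset.univ : Finset Bool), h e b
    from Finset.prod_congr rfl fun e _ => (Fintype.sum_bool _).symm, h2]

lemma BBs_disj_AAs {n k : ℕ} (S : Finset (Fin n)) : ∀ e ∈ BBs n k S, e ∉ AAs n S := by
  intro e heB heA
  rw [BBs, Finset.mem_image] at heB
  rw [AAs, Finset.mem_image] at heA
  obtain ⟨q, hq, rfl⟩ := heB
  obtain ⟨r, hr, hre⟩ := heA
  have hq1 : q.1 ∈ S := (Finset.mem_product.1 (Finset.mem_filter.1 hq).1).1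
  have hq2 : q.2 ∈ S := (Finset.mem_product.1 (Finset.mem_filter.1 hq).1).2
  have hr1 : r.1 ∈ Sᶜ := (Finset.mem_product.1 (Finset.mem_filter.1 hr).1).1
  rcases Sym2.mk_eq_mk_iff.1 hre with h | h
  · have : r.1 = q.1 := congrArg Prod.fst h
    exact (Finset.mem_compl.1 hr1) (this ▸ hq1)
  · have : r.1 = q.2 := congrArg Prod.fst h
    exact (Finset.mem_compl.1 hr1) (this ▸ hq2)

lemma nwExp_eval (n k : ℕ) (p : ℝ) (S : Finset (Fin n)) :
    nwExp n p (fun η => 9 ^ (Acnt n S η) * (1/3 : ℝ) ^ (Bcnt n k S η)) =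
      (1 + 8*p) ^ (AAs n S).card * (1 - 2*p/3) ^ (BBs n k S).card := by
  classical
  have hdisj := BBs_disj_AAs (k := k) S
  set A := AAs n S with hA
  set B := BBs n k S with hB
  set g : Sym2 (Fin n) → Bool → ℝ := fun e b =>
    if e ∈ A then (if b then (9:ℝ) else 1)
    else if e ∈ B then (if b then (1/3:ℝ) else 1) else 1 with hg
  have hsubB : B ⊆ Aᶜ := fun e he => Finset.mem_compl.2 (hdisj e he)
  have hX : ∀ η : Sym2 (Fin n) → Bool,
      (9:ℝ) ^ (Acnt n S η) * (1/3 : ℝ) ^ (Bcnt n k S η) = ∏ e : Sym2 (Fin n), g e (η e) := by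
    intro η
    rw [← Finset.prod_mul_prod_compl A (fun e => g e (η e))]
    have p1 : ∏ e ∈ A, g e (η e) = 9 ^ (Acnt n S η) := by
      calc ∏ e ∈ A, g e (η e) = ∏ e ∈ A, (if η e then (9:ℝ) else 1) :=
            Finset.prod_congr rfl (fun e he => by simp only [hg]; rw [if_pos he])
        _ = 9 ^ (Acnt n S η) := by
            rw [Finset.prod_ite, Finset.prod_const, Finset.prod_const, one_pow, mul_one]
            rfl
    have p2 : ∏ e ∈ Aᶜ, g e (η e) = (1/3 : ℝ) ^ (Bcnt n k S η) := by
      rw [← Finset.prod_subset hsubB (fun e heA heB => by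
        simp only [hg]; rw [if_neg (Finset.mem_compl.1 heA), if_neg heB])]
      calc ∏ e ∈ B, g e (η e) = ∏ e ∈ B, (if η e then (1/3:ℝ) else 1) :=
            Finset.prod_congr rfl (fun e he => by
              simp only [hg]; rw [if_neg (hdisj e he), if_pos he])
        _ = (1/3 : ℝ) ^ (Bcnt n k S η) := by
            rw [Finset.prod_ite, Finset.prod_const, Finset.prod_const, one_pow, mul_one]
            rfl
    rw [p1, p2]
  rw [nwExp]
  calc ∑ η : Sym2 (Fin n) → Bool, nwWeight n p η * (9 ^ (Acnt n S η) * (1/3:ℝ) ^ (Bcnt n k S η))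
      = ∑ η : Sym2 (Fin n) → Bool,
          ∏ e : Sym2 (Fin n), ((if η e then p else 1 - p) * g e (η e)) := by
        refine Finset.sum_congr rfl fun η _ => ?_
        rw [hX η, nwWeight, ← Finset.prod_mul_distrib]
    _ = ∏ e : Sym2 (Fin n),
          ((if (true : Bool) then p else 1 - p) * g e true
            + (if (false : Bool) then p else 1 - p) * g e false) :=
        sum_prod_bool (fun e b => (if b then p else 1 - p) * g e b)
    _ = ∏ e : Sym2 (Fin n), (if e ∈ A then 1 + 8*p else if e ∈ B then 1 - 2*p/3 else 1) := by
        refine Finset.prod_congr rfl fun e _ => ?_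
        by_cases heA : e ∈ A
        · simp only [hg, if_pos heA]; norm_num; ring
        · by_cases heB : e ∈ B
          · simp only [hg, if_neg heA, if_pos heB]; norm_num; ring
          · simp only [hg, if_neg heA, if_neg heB]; norm_num
    _ = (1 + 8*p) ^ A.card * (1 - 2*p/3) ^ B.card := by
        rw [← Finset.prod_mul_prod_compl A]
        congr 1
        · rw [Finset.prod_congr rfl (fun e (he : e ∈ A) => if_pos he), Finset.prod_const]
        · rw [← Finset.prod_subset hsubB (fun e heA heB => by
            rw [if_neg (Finset.mem_compl.1 heA), if_neg heB])]
          rw [Finset.prod_congr rfl (fun e (he : e ∈ B) => by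
            rw [if_neg (hdisj e he), if_pos he]), Finset.prod_const]


lemma nwPr_le_nwExp (n : ℕ) {p : ℝ} (h0 : 0 ≤ p) (h1 : p ≤ 1)
    (A : (Sym2 (Fin n) → Bool) → Prop) (X : (Sym2 (Fin n) → Bool) → ℝ)
    (hX0 : ∀ η, 0 ≤ X η) (hX1 : ∀ η, A η → 1 ≤ X η) :
    nwPr n p A ≤ nwExp n p X := by
  rw [nwPr, nwExp]
  refine Finset.sum_le_sum fun η _ => ?_
  by_cases h : A η
  · rw [if_pos h]
    exact le_mul_of_one_le_right (weight_nonneg n h0 h1 η) (hX1 η h)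
  · rw [if_neg h]
    exact mul_nonneg (weight_nonneg n h0 h1 η) (hX0 η)

lemma nwPr_union (n : ℕ) {p : ℝ} (h0 : 0 ≤ p) (h1 : p ≤ 1)
    (P : Finset (Fin n) → (Sym2 (Fin n) → Bool) → Prop) :
    nwPr n p (fun η => ∃ S, P S η) ≤ ∑ S : Finset (Fin n), nwPr n p (P S) := by
  rw [nwPr]
  have hswap : ∑ S : Finset (Fin n), nwPr n p (P S)
      = ∑ η : Sym2 (Fin n) → Bool, ∑ S : Finset (Fin n),
          (if P S η then nwWeight n p η else 0) := by
    simp only [nwPr]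
    exact Finset.sum_comm
  rw [hswap]
  refine Finset.sum_le_sum fun η _ => ?_
  by_cases h : ∃ S, P S η
  · obtain ⟨S0, hS0⟩ := h
    rw [if_pos ⟨S0, hS0⟩]
    calc nwWeight n p η = (if P S0 η then nwWeight n p η else 0) := (if_pos hS0).symm
      _ ≤ ∑ S : Finset (Fin n), (if P S η then nwWeight n p η else 0) :=
        Finset.single_le_sum (f := fun S => if P S η then nwWeight n p η else 0) (fun S _ => by
          show (0:ℝ) ≤ if P S η then nwWeight n p η else 0
          split_ifs
          · exact weight_nonneg n h0 h1 η
          · exact le_refl 0) (Finset.mem_univ S0)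
  · rw [if_neg h]
    exact Finset.sum_nonneg fun S _ => by
      split_ifs
      · exact weight_nonneg n h0 h1 η
      · exact le_refl 0

set_option maxHeartbeats 1000000 in
lemma perS {k : ℕ} (hk : 1 ≤ k) {c : ℝ} (hc : 40 < c) {n : ℕ}
    (hn : 10 * (k + 1) ≤ n) (hcn : c ≤ n) (S : Finset (Fin n)) :
    nwPr n (c / n) (fun η => 9 * (n : ℝ) / 10 < S.card ∧
        eTot (nwGraph n k η) S ≤ edgeCount (nwGraph n k η))
      ≤ Real.exp (-(2 * n)) := by
  have hn0 : 0 < n := by omega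
  haveI : NeZero n := ⟨by omega⟩
  have hn0' : (0:ℝ) < n := by exact_mod_cast hn0
  have hc0 : (0:ℝ) < c := by linarith
  set p := c / n with hp
  have hp0 : 0 ≤ p := by positivity
  have hp1 : p ≤ 1 := by rw [hp, div_le_one hn0']; exact hcn
  by_cases hcard : 9 * (n : ℝ) / 10 < S.card
  · -- ℕ facts
    have h9 : 9 * n < 10 * S.card := by
      have : (9 * n : ℝ) < 10 * S.card := by linarith
      exact_mod_cast this
    have hsn : S.card ≤ n := by
      have := Finset.card_le_univ S
      rwa [Fintype.card_fin] at this
    have hcards : S.card + Sᶜ.card = n := by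
      rw [Finset.card_add_card_compl, Fintype.card_fin]
    have hT10 : 10 * Sᶜ.card ≤ n := by omega
    have hdet : ∀ η, (9 * (n : ℝ) / 10 < S.card ∧
        eTot (nwGraph n k η) S ≤ edgeCount (nwGraph n k η)) →
        Bcnt n k S η ≤ 2 * Acnt n S η :=
      fun η h => core_det hk (by omega) S hT10 η h.2
    have hmain : nwPr n p (fun η => 9 * (n : ℝ) / 10 < S.card ∧
        eTot (nwGraph n k η) S ≤ edgeCount (nwGraph n k η))
        ≤ nwExp n p (fun η => 9 ^ (Acnt n S η) * (1/3 : ℝ) ^ (Bcnt n k S η)) := by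
      refine nwPr_le_nwExp n hp0 hp1 _ _ (fun η => by positivity) (fun η h => ?_)
      have hba := hdet η h
      have h3 : (3:ℝ) ^ (Bcnt n k S η) ≤ 3 ^ (2 * Acnt n S η) :=
        pow_le_pow_right₀ (by norm_num) hba
      have h9A : (9:ℝ) ^ (Acnt n S η) = 3 ^ (2 * Acnt n S η) := by
        rw [pow_mul]; norm_num
      rw [h9A, one_div, inv_pow, ← div_eq_mul_inv, le_div_iff₀ (by positivity), one_mul]
      exact h3
    have harith : ((AAs n S).card : ℝ) * (8*p) + ((BBs n k S).card : ℝ) * (-(2*p/3))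
        ≤ -(2*n) := by
      have hmA : ((AAs n S).card : ℝ) ≤ (Sᶜ.card : ℝ) * Sᶜ.card := by
        exact_mod_cast AAs_card_le S
      have hmB : (S.card : ℝ) * S.card
          ≤ 2 * ((BBs n k S).card : ℝ) + 4 * ((k:ℝ) * n) + S.card := by
        exact_mod_cast BBs_card_lb (k := k) S
      have hst : (S.card : ℝ) + (Sᶜ.card : ℝ) = n := by exact_mod_cast hcards
      have hsn' : (S.card : ℝ) ≤ n := by exact_mod_cast hsn
      have hnk : 10 * ((k:ℝ) + 1) ≤ n := by exact_mod_cast hn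
      have hk1 : (1:ℝ) ≤ k := by exact_mod_cast hk
      set a := ((AAs n S).card : ℝ) with hadef
      set b := ((BBs n k S).card : ℝ) with hbdef
      set s := (S.card : ℝ) with hsdef
      set t := ((Sᶜ.card : ℕ) : ℝ) with htdef
      have ht0 : 0 ≤ t := Nat.cast_nonneg _
      have hb0 : 0 ≤ b := Nat.cast_nonneg _
      have K1 : 24*c*a ≤ 24*c*(t*t) :=
        mul_le_mul_of_nonneg_left hmA (by positivity)
      have K2 : c*(s*s) ≤ c*(2*b + 4*((k:ℝ)*n) + s) :=
        mul_le_mul_of_nonneg_left hmB hc0.le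
      have T2 : t*t ≤ ((n:ℝ)/10)*((n:ℝ)/10) :=
        mul_self_le_mul_self ht0 (by linarith)
      have K3 : c*(t*t) ≤ c*(((n:ℝ)/10)*((n:ℝ)/10)) :=
        mul_le_mul_of_nonneg_left T2 hc0.le
      have S2 : (9*(n:ℝ)/10)*(9*(n:ℝ)/10) ≤ s*s :=
        mul_self_le_mul_self (by positivity) (by linarith)
      have K4 : c*((9*(n:ℝ)/10)*(9*(n:ℝ)/10)) ≤ c*(s*s) :=
        mul_le_mul_of_nonneg_left S2 hc0.le
      have hkr : (k:ℝ)*n ≤ ((n:ℝ)/10 - 1)*n :=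
        mul_le_mul_of_nonneg_right (by linarith) hn0'.le
      have K5 : c*((k:ℝ)*n) ≤ c*(((n:ℝ)/10 - 1)*n) :=
        mul_le_mul_of_nonneg_left hkr hc0.le
      have K6 : (0:ℝ) ≤ (c - 40)*((n:ℝ)*n) :=
        mul_nonneg (by linarith) (by positivity)
      have K7 : c*s ≤ c*n := mul_le_mul_of_nonneg_left hsn' hc0.le
      have K8 : (0:ℝ) ≤ c*n := by positivity
      have key : 24*c*a + 6*(n:ℝ)*n ≤ 2*c*b := by nlinarith [K1, K2, K3, K4, K5, K6, K7, K8]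
      have h3n : (0:ℝ) < 3*(n:ℝ) := by positivity
      refine (mul_le_mul_iff_of_pos_right h3n).1 ?_
      have lhs_eq : (a*(8*p) + b*(-(2*p/3))) * (3*(n:ℝ)) = 24*(p*(n:ℝ))*a - 2*(p*(n:ℝ))*b := by
        ring
      rw [lhs_eq, hp, div_mul_cancel₀ c (ne_of_gt hn0')]
      nlinarith [key]
    calc nwPr n p (fun η => 9 * (n : ℝ) / 10 < S.card ∧
          eTot (nwGraph n k η) S ≤ edgeCount (nwGraph n k η))
        ≤ nwExp n p (fun η => 9 ^ (Acnt n S η) * (1/3 : ℝ) ^ (Bcnt n k S η)) := hmain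
      _ = (1 + 8*p) ^ (AAs n S).card * (1 - 2*p/3) ^ (BBs n k S).card := nwExp_eval n k p S
      _ ≤ Real.exp (((AAs n S).card : ℝ) * (8*p))
            * Real.exp (((BBs n k S).card : ℝ) * (-(2*p/3))) := by
          rw [Real.exp_nat_mul, Real.exp_nat_mul]
          have e1 : (1+8*p) ≤ Real.exp (8*p) := by
            have := Real.add_one_le_exp (8*p); linarith
          have e2 : (1-2*p/3) ≤ Real.exp (-(2*p/3)) := by
            have := Real.add_one_le_exp (-(2*p/3)); linarith
          have b1 : (0:ℝ) ≤ 1 + 8*p := by linarith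
          have b2 : (0:ℝ) ≤ 1 - 2*p/3 := by linarith
          exact mul_le_mul (pow_le_pow_left₀ b1 e1 _) (pow_le_pow_left₀ b2 e2 _)
            (by positivity) (by positivity)
      _ = Real.exp (((AAs n S).card : ℝ) * (8*p) + ((BBs n k S).card : ℝ) * (-(2*p/3))) :=
          (Real.exp_add _ _).symm
      _ ≤ Real.exp (-(2*n)) := Real.exp_le_exp.2 harith
  · have hzero : nwPr n p (fun η => 9 * (n : ℝ) / 10 < S.card ∧
        eTot (nwGraph n k η) S ≤ edgeCount (nwGraph n k η)) = 0 :=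
      Finset.sum_eq_zero fun η _ => if_neg (fun h => hcard h.1)
    rw [hzero]
    positivity

end NWAux

/-- **Lemma (expansion of very large sets, `c > 40`).** Fix `k ≥ 1` and `c > 40`, let `p = c/n`,
and let `H` be an `(n,k,p)` Newman–Watts small world. Then for all `n` sufficiently large, the
probability that some `S ⊆ [n]` with `|S| > 9n/10` has `e(S) ≤ |E(H)|` is at most `(2/e)^n`. -/
theorem expansion_of_very_large_sets (k : ℕ) (hk : 1 ≤ k) (c : ℝ) (hc : 40 < c) :
    ∃ N : ℕ, ∀ n : ℕ, N ≤ n →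
      nwPr n (c / n) (fun η => ∃ S : Finset (Fin n),
        9 * (n : ℝ) / 10 < S.card ∧
        eTot (nwGraph n k η) S ≤ edgeCount (nwGraph n k η)) ≤
      (2 / Real.exp 1) ^ n := by
  refine ⟨10 * (k + 1) + ⌈c⌉₊, fun n hn => ?_⟩
  have h10k : 10 * (k + 1) ≤ n := le_trans (Nat.le_add_right _ _) hn
  have hceil : ⌈c⌉₊ ≤ n := le_trans (Nat.le_add_left _ _) hn
  have hn0 : 0 < n := by omega
  have hn0' : (0:ℝ) < n := by exact_mod_cast hn0
  have hc0 : (0:ℝ) < c := by linarith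
  have hcn : c ≤ n := le_trans (Nat.le_ceil c) (by exact_mod_cast hceil)
  have hp0 : 0 ≤ c / n := by positivity
  have hp1 : c / n ≤ 1 := by rw [div_le_one hn0']; exact hcn
  calc nwPr n (c/n) (fun η => ∃ S : Finset (Fin n),
        9 * (n : ℝ) / 10 < S.card ∧ eTot (nwGraph n k η) S ≤ edgeCount (nwGraph n k η))
      ≤ ∑ S : Finset (Fin n), nwPr n (c/n) (fun η =>
          9 * (n : ℝ) / 10 < S.card ∧ eTot (nwGraph n k η) S ≤ edgeCount (nwGraph n k η)) :=
        NWAux.nwPr_union n hp0 hp1 _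
    _ ≤ ∑ _S : Finset (Fin n), Real.exp (-(2*n)) :=
        Finset.sum_le_sum fun S _ => NWAux.perS hk hc h10k hcn S
    _ = (2:ℝ)^n * Real.exp (-(2*n)) := by
        rw [Finset.sum_const, Finset.card_univ, Fintype.card_finset, Fintype.card_fin,
          nsmul_eq_mul]
        push_cast
        ring
    _ ≤ (2 / Real.exp 1)^n := by
        rw [div_pow, Real.exp_one_pow, div_eq_mul_inv, ← Real.exp_neg]
        have hexp : Real.exp (-(2*n)) ≤ Real.exp (-(n:ℝ)) := by
          apply Real.exp_le_exp.2
          have : (0:ℝ) ≤ n := hn0'.le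
          linarith
        exact mul_le_mul_of_nonneg_left hexp (by positivity)


end
end
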